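/- arXiv:1707.04054 — 7 statements merged into one kernel-verified Lean document; each statement's English description precedes it below -/
import Mathlib

section
/- The intersection of finitely many convergence sets in Ω is a convergence set in Ω. -/
/-- `E` is a convergence set in `Ω ⊆ ℂ^N`. -/
def IsConvergenceSet (N : ℕ) (Ω E : Set (Fin N → ℂ)) : Prop :=
  ∃ f : ℕ → (Fin N → ℂ) → ℂ, (∀ n, DifferentiableOn ℂ (f n) Ω) ∧
    E = {z ∈ Ω | ∃ r > (0 : ℝ), ∀ n, ‖f n z‖ < r ^ n}

/-- Combined sequence: `2k` interleaved streams; for each `i < k`, the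
even stream `2^(n^2) * (f i 0)^(n^3+1)` and the odd stream `(f i n)^(2k)`. -/
def combSeq (k N : ℕ) (hk : 0 < k) (f : Fin k → ℕ → (Fin N → ℂ) → ℂ) (m : ℕ) :
    (Fin N → ℂ) → ℂ :=
  if (m % (2*k)) % 2 = 0 then
    fun z => (2:ℂ)^((m/(2*k))^2) *
      (f ⟨(m % (2*k))/2, Nat.div_lt_of_lt_mul (Nat.mod_lt m (by omega))⟩ 0 z)^((m/(2*k))^3+1)
  else
    fun z => (f ⟨(m % (2*k))/2, Nat.div_lt_of_lt_mul (Nat.mod_lt m (by omega))⟩ (m/(2*k)) z)^(2*k)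

lemma combSeq_even {k N : ℕ} (hk : 0 < k) (f : Fin k → ℕ → (Fin N → ℂ) → ℂ)
    (n : ℕ) (i : Fin k) :
    combSeq k N hk f (n * (2*k) + 2*(i:ℕ)) =
      fun z => (2:ℂ)^(n^2) * (f i 0 z)^(n^3+1) := by
  have hi := i.isLt
  have h1 : (n * (2*k) + 2*(i:ℕ)) % (2*k) = 2*(i:ℕ) := by
    rw [mul_comm n (2*k), Nat.mul_add_mod]
    exact Nat.mod_eq_of_lt (by omega)
  have h2 : (n * (2*k) + 2*(i:ℕ)) / (2*k) = n := by
    rw [add_comm, mul_comm n (2*k), Nat.add_mul_div_left _ _ (by omega : 0 < 2*k),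
      Nat.div_eq_of_lt (by omega)]
    omega
  simp only [combSeq, h1, h2, Nat.mul_mod_right]
  simp

lemma combSeq_odd {k N : ℕ} (hk : 0 < k) (f : Fin k → ℕ → (Fin N → ℂ) → ℂ)
    (n : ℕ) (i : Fin k) :
    combSeq k N hk f (n * (2*k) + (2*(i:ℕ)+1)) =
      fun z => (f i n z)^(2*k) := by
  have hi := i.isLt
  have h1 : (n * (2*k) + (2*(i:ℕ)+1)) % (2*k) = 2*(i:ℕ)+1 := by
    rw [mul_comm n (2*k), Nat.mul_add_mod]
    exact Nat.mod_eq_of_lt (by omega)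
  have h2 : (n * (2*k) + (2*(i:ℕ)+1)) / (2*k) = n := by
    rw [add_comm, mul_comm n (2*k), Nat.add_mul_div_left _ _ (by omega : 0 < 2*k),
      Nat.div_eq_of_lt (by omega)]
    omega
  simp only [combSeq, h1, h2]
  have : (2*(i:ℕ)+1) % 2 = 1 := by omega
  rw [if_neg (by omega)]
  have : (2*(i:ℕ)+1)/2 = (i:ℕ) := by omega
  simp [this]

lemma one_le_pow'' {R : ℝ} (h : 1 ≤ R) (n : ℕ) : 1 ≤ R^n := by
  calc (1:ℝ) = 1^n := (one_pow n).symm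
  _ ≤ R^n := pow_le_pow_left₀ zero_le_one h n

/-- The intersection of finitely many convergence sets in `Ω` is a convergence set in `Ω`. -/
theorem stmt4 (N : ℕ) (Ω : Set (Fin N → ℂ)) (hΩ : IsOpen Ω)
    (k : ℕ) (hk : 0 < k) (E : Fin k → Set (Fin N → ℂ))
    (hE : ∀ i, IsConvergenceSet N Ω (E i)) :
    IsConvergenceSet N Ω (⋂ i, E i) := by
  choose f hdf hEf using hE
  refine ⟨combSeq k N hk f, ?_, ?_⟩
  · intro m
    unfold combSeq
    split
    · exact ((hdf _ 0).pow _).const_mul _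
    · exact (hdf _ _).pow _
  · ext z
    simp only [Set.mem_iInter, hEf, Set.mem_setOf_eq, Set.mem_sep_iff]
    constructor
    · rintro h
      have hzΩ : z ∈ Ω := (h ⟨0, hk⟩).1
      choose r hr hfr using fun i => (h i).2
      have hc : ∀ i, ‖f i 0 z‖ < 1 := fun i => by simpa using hfr i 0
      have hNe : ∀ i, ∃ Nc : ℕ, ∀ n, Nc ≤ n → ‖f i 0 z‖^n ≤ 1/2 := by
        intro i
        obtain ⟨Nc, hNc⟩ := exists_pow_lt_of_lt_one (by norm_num : (0:ℝ) < 1/2) (hc i)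
        exact ⟨Nc, fun n hn =>
          le_trans (pow_le_pow_of_le_one (norm_nonneg _) (hc i).le hn) hNc.le⟩
      choose Nn hNn using hNe
      set R := 2 + ∑ i : Fin k, ((2:ℝ)^(Nn i) + r i) with hRdef
      have hterm : ∀ i, (0:ℝ) ≤ (2:ℝ)^(Nn i) + r i :=
        fun i => add_nonneg (by positivity) (hr i).le
      have hsum : ∀ i, (2:ℝ)^(Nn i) + r i ≤ ∑ j : Fin k, ((2:ℝ)^(Nn j) + r j) :=
        fun i => Finset.single_le_sum (fun j _ => hterm j) (Finset.mem_univ i)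
      have hsum0 : (0:ℝ) ≤ ∑ j : Fin k, ((2:ℝ)^(Nn j) + r j) :=
        Finset.sum_nonneg fun j _ => hterm j
      have hR2 : (2:ℝ) ≤ R := by rw [hRdef]; linarith
      have hR1 : (1:ℝ) ≤ R := by linarith
      have hRr : ∀ i, r i ≤ R := by
        intro i
        have h1 := hsum i
        have h2 : (0:ℝ) ≤ (2:ℝ)^(Nn i) := by positivity
        rw [hRdef]; linarith
      have hRN : ∀ i, (2:ℝ)^(Nn i) ≤ R := by
        intro i
        have h1 := hsum i
        have h2 : (0:ℝ) ≤ r i := (hr i).le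
        rw [hRdef]; linarith
      refine ⟨hzΩ, R, by linarith, ?_⟩
      intro m
      have hm0 := (Nat.div_add_mod' m (2*k)).symm
      have hml : m % (2*k) < 2*k := Nat.mod_lt m (by omega)
      set nq := m / (2*k) with hnq
      set j := m % (2*k) with hj
      have hdm2 := Nat.div_add_mod j 2
      have hj2 : j % 2 < 2 := Nat.mod_lt _ (by omega)
      set i0 := j / 2 with hi0
      have hi0k : i0 < k := by omega
      set i : Fin k := ⟨i0, hi0k⟩ with hidef
      by_cases hpar : j % 2 = 0
      · -- even stream
        have hm : m = nq * (2*k) + 2*(i:ℕ) := by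
          rw [hm0]; congr 1; simp only [hidef, Fin.val_mk]; omega
        rw [hm, combSeq_even hk f nq i]
        have hn2 : ‖(2:ℂ)‖ = 2 := by norm_num
        rw [norm_mul, norm_pow, norm_pow, hn2]
        set c := ‖f i 0 z‖ with hcdef
        rcases Nat.eq_zero_or_pos nq with h0 | h1
        · simp only [h0]
          norm_num
          exact lt_of_lt_of_le (hc i) (one_le_pow'' hR1 _)
        · by_cases hcase : Nn i ≤ nq
          · have h2 : c^nq ≤ 1/2 := hNn i nq hcase
            have hc0 : (0:ℝ) ≤ c := norm_nonneg _
            have key : (2:ℝ)^(nq^2) * c^(nq^3+1) ≤ c := by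
              have e1 : c^(nq^3+1) = (c^nq)^(nq^2) * c := by
                rw [← pow_mul, ← pow_succ]; congr 1; ring
              calc (2:ℝ)^(nq^2) * c^(nq^3+1) = (2*c^nq)^(nq^2) * c := by
                    rw [e1, mul_pow]; ring
                _ ≤ 1 * c := by
                    refine mul_le_mul_of_nonneg_right ?_ hc0
                    calc (2*c^nq)^(nq^2) ≤ 1^(nq^2) :=
                          pow_le_pow_left₀ (by positivity) (by linarith) _
                      _ = 1 := one_pow _
                _ = c := one_mul c
            exact lt_of_le_of_lt key (lt_of_lt_of_le (hc i) (one_le_pow'' hR1 _))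
          · push_neg at hcase
            have key1 : (2:ℝ)^(nq^2) * c^(nq^3+1) ≤ 2^(nq^2) := by
              have hle : c^(nq^3+1) ≤ 1 := pow_le_one₀ (norm_nonneg _) (hc i).le
              calc (2:ℝ)^(nq^2) * c^(nq^3+1) ≤ 2^(nq^2) * 1 :=
                    mul_le_mul_of_nonneg_left hle (by positivity)
                _ = 2^(nq^2) := mul_one _
            have a1 : nq ≤ nq*(2*k) := Nat.le_mul_of_pos_right _ (by omega)
            have e : nq^2 < Nn i * (nq*(2*k)+2*(i:ℕ)) := by
              have a2 : nq ≤ nq*(2*k)+2*(i:ℕ) := le_trans a1 (Nat.le_add_right _ _)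
              calc nq^2 = nq*nq := sq nq
                _ < Nn i * nq := by
                    apply Nat.mul_lt_mul_of_lt_of_le hcase le_rfl h1
                _ ≤ Nn i * (nq*(2*k)+2*(i:ℕ)) := Nat.mul_le_mul_left _ a2
            have key2 : (2:ℝ)^(nq^2) < R^(nq*(2*k)+2*(i:ℕ)) := by
              calc (2:ℝ)^(nq^2) < 2^(Nn i * (nq*(2*k)+2*(i:ℕ))) :=
                    pow_lt_pow_right₀ one_lt_two e
                _ = ((2:ℝ)^(Nn i))^(nq*(2*k)+2*(i:ℕ)) := pow_mul 2 _ _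
                _ ≤ R^(nq*(2*k)+2*(i:ℕ)) :=
                    pow_le_pow_left₀ (by positivity) (hRN i) _
            exact lt_of_le_of_lt key1 key2
      · -- odd stream
        have hm : m = nq * (2*k) + (2*(i:ℕ)+1) := by
          rw [hm0]; congr 1; simp only [hidef, Fin.val_mk]; omega
        rw [hm, combSeq_odd hk f nq i, norm_pow]
        calc ‖f i nq z‖^(2*k) < ((r i)^nq)^(2*k) :=
              pow_lt_pow_left₀ (hfr i nq) (norm_nonneg _) (by omega)
          _ = (r i)^(nq*(2*k)) := by rw [← pow_mul]
          _ ≤ R^(nq*(2*k)) := pow_le_pow_left₀ (hr i).le (hRr i) _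
          _ ≤ R^(nq*(2*k)+(2*(i:ℕ)+1)) := pow_le_pow_right₀ hR1 (Nat.le_add_right _ _)
    · rintro ⟨hzΩ, R0, hR0, hg⟩
      intro i
      refine ⟨hzΩ, ?_⟩
      set S := max R0 2 with hS
      have hS2 : (2:ℝ) ≤ S := le_max_right _ _
      have hS1 : (1:ℝ) ≤ S := by linarith
      have hgS : ∀ m, ‖combSeq k N hk f m z‖ < S^m := fun m =>
        lt_of_lt_of_le (hg m) (pow_le_pow_left₀ hR0.le (le_max_left _ _) m)
      have hc : ‖f i 0 z‖ < 1 := by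
        by_contra hcon
        push_neg at hcon
        obtain ⟨L0, hL0⟩ := pow_unbounded_of_one_lt S one_lt_two
        set L := L0 + 1 with hL
        have hSL : S ≤ 2^L := le_trans hL0.le (pow_le_pow_right₀ one_le_two (by omega))
        set n := L * (2*k + 2*(i:ℕ)) with hn
        have hn1 : 1 ≤ n := by
          rw [hn]; exact Nat.one_le_iff_ne_zero.mpr (Nat.mul_ne_zero (by omega) (by omega))
        have hval := combSeq_even hk f n i
        have h2 := hgS (n*(2*k) + 2*(i:ℕ))
        rw [hval] at h2
        simp only at h2
        have hn2c : ‖(2:ℂ)‖ = 2 := by norm_num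
        rw [norm_mul, norm_pow, norm_pow, hn2c] at h2
        have h1 : (2:ℝ)^(n^2) ≤ 2^(n^2) * ‖f i 0 z‖^(n^3+1) := by
          have : (1:ℝ) ≤ ‖f i 0 z‖^(n^3+1) := one_le_pow'' hcon _
          nlinarith [pow_pos (zero_lt_two (α := ℝ)) (n^2)]
        have h4 : L*(n*(2*k) + 2*(i:ℕ)) ≤ n^2 := by
          calc L*(n*(2*k) + 2*(i:ℕ)) = n*(2*k)*L + 2*(i:ℕ)*L := by ring
            _ ≤ n*(2*k)*L + 2*(i:ℕ)*L*n := by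
                exact Nat.add_le_add_left (Nat.le_mul_of_pos_right _ (by omega)) _
            _ = n * n := by rw [hn]; ring
            _ = n^2 := (sq n).symm
        have h3 : S^(n*(2*k) + 2*(i:ℕ)) ≤ 2^(n^2) := by
          calc S^(n*(2*k) + 2*(i:ℕ)) ≤ ((2:ℝ)^L)^(n*(2*k) + 2*(i:ℕ)) :=
                pow_le_pow_left₀ (by linarith) hSL _
            _ = (2:ℝ)^(L*(n*(2*k) + 2*(i:ℕ))) := (pow_mul 2 _ _).symm
            _ ≤ (2:ℝ)^(n^2) := pow_le_pow_right₀ one_le_two h4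
        linarith
      refine ⟨S^2, by positivity, ?_⟩
      intro n
      cases n with
      | zero => simpa using hc
      | succ n' =>
        set n := n' + 1 with hndef
        have hval := combSeq_odd hk f n i
        have h := hgS (n*(2*k) + (2*(i:ℕ)+1))
        rw [hval] at h
        simp only at h
        rw [norm_pow] at h
        have hik := i.isLt
        have h2 : S^(n*(2*k) + (2*(i:ℕ)+1)) ≤ (S^(n+1))^(2*k) := by
          rw [← pow_mul]
          apply pow_le_pow_right₀ hS1
          have h3 : 2*(i:ℕ)+1 ≤ 2*k := by omega
          calc n*(2*k) + (2*(i:ℕ)+1) ≤ n*(2*k) + 2*k := Nat.add_le_add_left h3 _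
            _ = (n+1)*(2*k) := by ring
        have h4 : ‖f i n z‖ < S^(n+1) :=
          lt_of_pow_lt_pow_left₀ (2*k) (by positivity) (lt_of_lt_of_le h h2)
        calc ‖f i n z‖ < S^(n+1) := h4
          _ ≤ S^(2*n) := pow_le_pow_right₀ hS1 (by omega)
          _ = (S^2)^n := by rw [← pow_mul]
end

section
/- Every countable subset of ℂ is a convergence set in ℂ; in particular, the set ℚ of rational numbers (as a subset of ℂ) is the convergence set of some formal power series with polynomial coefficients. -/
open Polynomial

/-- Every countable subset of `ℂ` is a convergence set in `ℂ` (with polynomial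
coefficients); in particular `ℚ ⊆ ℂ` is the convergence set of some formal power
series with polynomial coefficients. -/
theorem stmt6 :
    (∀ E : Set ℂ, E.Countable →
      ∃ f : ℕ → Polynomial ℂ,
        {z : ℂ | ∃ r > (0 : ℝ), ∀ n, ‖(f n).eval z‖ < r ^ n} = E) ∧
    ∃ f : ℕ → Polynomial ℂ,
      {z : ℂ | ∃ r > (0 : ℝ), ∀ n, ‖(f n).eval z‖ < r ^ n} =
        Set.range (fun q : ℚ => (q : ℂ)) := by
  have main : ∀ E : Set ℂ, E.Countable →
      ∃ f : ℕ → Polynomial ℂ,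
        {z : ℂ | ∃ r > (0 : ℝ), ∀ n, ‖(f n).eval z‖ < r ^ n} = E := by
    intro E hE
    rcases E.eq_empty_or_nonempty with rfl | hne
    · refine ⟨fun _ => 1, ?_⟩
      ext z
      simp only [Set.mem_setOf_eq, Set.mem_empty_iff_false, iff_false, not_exists]
      rintro r ⟨hr, h⟩
      have h0 := h 0
      simp at h0
    · obtain ⟨a, rfl⟩ := hE.exists_eq_range hne
      set P : ℕ → Polynomial ℂ := fun j =>
        ∏ k ∈ Finset.range (j + 1), (X - C (a k)) with hPdef
      have hPeval : ∀ j z, (P j).eval z = ∏ k ∈ Finset.range (j + 1), (z - a k) := by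
        intro j z
        simp [hPdef, Polynomial.eval_prod]
      refine ⟨fun n => if n = 0 then 0 else
        C (((n.unpair.1 + 2 : ℕ) : ℂ) ^ n) * P n.unpair.1, ?_⟩
      ext z
      simp only [Set.mem_setOf_eq]
      constructor
      · rintro ⟨r, hr, h⟩
        by_contra hz
        -- pick j with 2 r ≤ j + 2
        obtain ⟨j, hj⟩ : ∃ j : ℕ, 2 * r ≤ ((j + 2 : ℕ) : ℝ) := by
          obtain ⟨j, hj⟩ := exists_nat_ge (2 * r)
          exact ⟨j, by push_cast; linarith⟩
        have hε : 0 < ‖(P j).eval z‖ := by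
          rw [norm_pos_iff, hPeval]
          refine Finset.prod_ne_zero_iff.2 fun k _ => ?_
          intro hk
          exact hz ⟨k, (sub_eq_zero.1 hk).symm⟩
        obtain ⟨t, ht⟩ : ∃ t : ℕ, (1 / 2 : ℝ) ^ t < ‖(P j).eval z‖ :=
          exists_pow_lt_of_lt_one hε (by norm_num)
        set n := Nat.pair j (t + 1) with hn
        have hnt : t + 1 ≤ n := Nat.right_le_pair _ _
        have hn0 : n ≠ 0 := by omega
        have hj' : n.unpair.1 = j := by rw [hn, Nat.unpair_pair]
        have hval := h n
        rw [if_neg hn0, hj'] at hval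
        have hnorm : ‖(C (((j + 2 : ℕ) : ℂ) ^ n) * P j).eval z‖
            = ((j + 2 : ℕ) : ℝ) ^ n * ‖(P j).eval z‖ := by
          rw [Polynomial.eval_mul, Polynomial.eval_C, norm_mul, norm_pow,
            Complex.norm_natCast]
        rw [hnorm] at hval
        -- now derive contradiction: r^n ≤ (j+2)^n * ε
        have h1 : (1 / 2 : ℝ) ^ n ≤ (1 / 2 : ℝ) ^ (t + 1) :=
          pow_le_pow_of_le_one (by norm_num) (by norm_num) hnt
        have h2 : (1 / 2 : ℝ) ^ (t + 1) ≤ (1 / 2 : ℝ) ^ t :=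
          pow_le_pow_of_le_one (by norm_num) (by norm_num) (by omega)
        have h3 : (1 / 2 : ℝ) ^ n ≤ ‖(P j).eval z‖ := le_of_lt (lt_of_le_of_lt (h1.trans h2) ht)
        have h4 : r ^ n ≤ ((j + 2 : ℕ) : ℝ) ^ n * ‖(P j).eval z‖ := by
          have : r ^ n = (2 * r) ^ n * (1 / 2 : ℝ) ^ n := by
            rw [← mul_pow]; ring_nf
          rw [this]
          have hb : (0:ℝ) ≤ 2 * r := by linarith
          exact mul_le_mul (pow_le_pow_left₀ hb hj n) h3 (by positivity) (by positivity)
        linarith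
      · rintro ⟨i, rfl⟩
        refine ⟨1 + ∑ j ∈ Finset.range i, ((j + 2 : ℕ) : ℝ) * (1 + ‖(P j).eval (a i)‖), ?_, ?_⟩
        · have : (0:ℝ) ≤ ∑ j ∈ Finset.range i, ((j + 2 : ℕ) : ℝ) * (1 + ‖(P j).eval (a i)‖) :=
            Finset.sum_nonneg fun j _ => by positivity
          linarith
        · intro n
          set S := ∑ j ∈ Finset.range i, ((j + 2 : ℕ) : ℝ) * (1 + ‖(P j).eval (a i)‖) with hS
          have hS0 : (0:ℝ) ≤ S :=
            Finset.sum_nonneg fun j _ => by positivity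
          rcases eq_or_ne n 0 with rfl | hn0
          · simp
          · rw [if_neg hn0]
            set j := n.unpair.1 with hjdef
            rcases lt_or_ge j i with hji | hij
            · -- j < i : bound values
              have hnorm : ‖(C (((j + 2 : ℕ) : ℂ) ^ n) * P j).eval (a i)‖
                  = ((j + 2 : ℕ) : ℝ) ^ n * ‖(P j).eval (a i)‖ := by
                rw [Polynomial.eval_mul, Polynomial.eval_C, norm_mul, norm_pow,
                  Complex.norm_natCast]
              rw [hnorm]
              set c := ‖(P j).eval (a i)‖ with hc
              have hc0 : 0 ≤ c := norm_nonneg _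
              have hstep : ((j + 2 : ℕ) : ℝ) ^ n * c ≤ (((j + 2 : ℕ) : ℝ) * (1 + c)) ^ n := by
                rw [mul_pow]
                refine mul_le_mul_of_nonneg_left ?_ (by positivity)
                calc c ≤ 1 + c := by linarith
                  _ ≤ (1 + c) ^ n := le_self_pow₀ (by linarith) hn0
              have hterm : ((j + 2 : ℕ) : ℝ) * (1 + c) ≤ S := by
                rw [hS]
                exact Finset.single_le_sum (f := fun j => ((j + 2 : ℕ) : ℝ) * (1 + ‖(P j).eval (a i)‖))
                  (fun k _ => by positivity) (Finset.mem_range.2 hji)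
              have hlt : (((j + 2 : ℕ) : ℝ) * (1 + c)) ^ n < (1 + S) ^ n := by
                refine pow_lt_pow_left₀ ?_ (by positivity) hn0
                linarith
              linarith
            · -- i ≤ j : value is zero
              have : (P j).eval (a i) = 0 := by
                rw [hPeval]
                exact Finset.prod_eq_zero (i := i) (Finset.mem_range.2 (by omega)) (sub_self _)
              rw [Polynomial.eval_mul, this, mul_zero, norm_zero]
              positivity
  exact ⟨main, main _ (Set.countable_range _)⟩
end

section
/- A compact set E ⊆ Ω ⊆ ℂ is holomorphically convex in Ω if and only if no bounded connected component of ℂ \ E is contained in Ω. -/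
/-- The holomorphic hull of `E` in `Ω ⊆ ℂ`. -/
def holHull (Ω E : Set ℂ) : Set ℂ :=
  {z ∈ Ω | ∀ h : ℂ → ℂ, DifferentiableOn ℂ h Ω →
    ‖h z‖ ≤ sSup ((fun w => ‖h w‖) '' E)}

open Metric Set

/-- `f` can be uniformly approximated on `E` by functions holomorphic on `Ω`. -/
def Approx (Ω E : Set ℂ) (f : ℂ → ℂ) : Prop :=
  ∀ ε > 0, ∃ h : ℂ → ℂ, DifferentiableOn ℂ h Ω ∧ ∀ ζ ∈ E, ‖h ζ - f ζ‖ ≤ ε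

namespace Approx

variable {Ω E : Set ℂ} {f g : ℂ → ℂ}

theorem of_diff (hf : DifferentiableOn ℂ f Ω) : Approx Ω E f :=
  fun ε hε => ⟨f, hf, fun ζ _ => by simp [hε.le]⟩

theorem congr (hfg : ∀ ζ ∈ E, f ζ = g ζ) (hf : Approx Ω E f) : Approx Ω E g := by
  intro ε hε
  obtain ⟨h, hd, hh⟩ := hf ε hε
  exact ⟨h, hd, fun ζ hζ => by rw [← hfg ζ hζ]; exact hh ζ hζ⟩

theorem of_close (H : ∀ δ > (0:ℝ), ∃ f', Approx Ω E f' ∧ ∀ ζ ∈ E, ‖f' ζ - f ζ‖ ≤ δ) :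
    Approx Ω E f := by
  intro ε hε
  obtain ⟨f', hf', hcl⟩ := H (ε / 2) (by positivity)
  obtain ⟨h, hd, hh⟩ := hf' (ε / 2) (by positivity)
  refine ⟨h, hd, fun ζ hζ => ?_⟩
  calc ‖h ζ - f ζ‖ = ‖(h ζ - f' ζ) + (f' ζ - f ζ)‖ := by ring_nf
    _ ≤ ‖h ζ - f' ζ‖ + ‖f' ζ - f ζ‖ := norm_add_le _ _
    _ ≤ ε / 2 + ε / 2 := add_le_add (hh ζ hζ) (hcl ζ hζ)
    _ = ε := by ring

theorem add (hf : Approx Ω E f) (hg : Approx Ω E g) :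
    Approx Ω E (fun ζ => f ζ + g ζ) := by
  intro ε hε
  obtain ⟨h, hd, hh⟩ := hf (ε / 2) (by positivity)
  obtain ⟨k, kd, hk⟩ := hg (ε / 2) (by positivity)
  refine ⟨fun ζ => h ζ + k ζ, hd.add kd, fun ζ hζ => ?_⟩
  calc ‖h ζ + k ζ - (f ζ + g ζ)‖ = ‖(h ζ - f ζ) + (k ζ - g ζ)‖ := by ring_nf
    _ ≤ ‖h ζ - f ζ‖ + ‖k ζ - g ζ‖ := norm_add_le _ _
    _ ≤ ε / 2 + ε / 2 := add_le_add (hh ζ hζ) (hk ζ hζ)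
    _ = ε := by ring

theorem const_mul (c : ℂ) (hf : Approx Ω E f) : Approx Ω E (fun ζ => c * f ζ) := by
  intro ε hε
  have hc : (0:ℝ) < ‖c‖ + 1 := by positivity
  obtain ⟨h, hd, hh⟩ := hf (ε / (‖c‖ + 1)) (by positivity)
  refine ⟨fun ζ => c * h ζ, (differentiableOn_const c).mul hd, fun ζ hζ => ?_⟩
  have : c * h ζ - c * f ζ = c * (h ζ - f ζ) := by ring
  rw [this, norm_mul]
  calc ‖c‖ * ‖h ζ - f ζ‖ ≤ (‖c‖ + 1) * (ε / (‖c‖ + 1)) := by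
        apply mul_le_mul (by linarith [norm_nonneg c]) (hh ζ hζ) (norm_nonneg _) (by positivity)
    _ = ε := by field_simp

theorem mul (hf : Approx Ω E f) (hg : Approx Ω E g) {Mf Mg : ℝ}
    (hMf : ∀ ζ ∈ E, ‖f ζ‖ ≤ Mf) (hMg : ∀ ζ ∈ E, ‖g ζ‖ ≤ Mg) :
    Approx Ω E (fun ζ => f ζ * g ζ) := by
  intro ε hε
  set Mf' := max Mf 0 with hMf'
  set Mg' := max Mg 0 with hMg'
  have hMf0 : (0:ℝ) ≤ Mf' := le_max_right _ _
  have hMg0 : (0:ℝ) ≤ Mg' := le_max_right _ _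
  have hden : (0:ℝ) < Mf' + Mg' + 2 := by linarith
  set δ := min 1 (ε / (Mf' + Mg' + 2)) with hδdef
  have hδ0 : 0 < δ := lt_min one_pos (by positivity)
  obtain ⟨h, hd, hh⟩ := hf δ hδ0
  obtain ⟨k, kd, hk⟩ := hg δ hδ0
  refine ⟨fun ζ => h ζ * k ζ, hd.mul kd, fun ζ hζ => ?_⟩
  have hδ1 : δ ≤ 1 := min_le_left _ _
  have hδ2 : δ ≤ ε / (Mf' + Mg' + 2) := min_le_right _ _
  have hbf : ‖f ζ‖ ≤ Mf' := (hMf ζ hζ).trans (le_max_left _ _)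
  have hbg : ‖g ζ‖ ≤ Mg' := (hMg ζ hζ).trans (le_max_left _ _)
  have hbh : ‖h ζ‖ ≤ Mf' + 1 := by
    calc ‖h ζ‖ = ‖(h ζ - f ζ) + f ζ‖ := by ring_nf
      _ ≤ ‖h ζ - f ζ‖ + ‖f ζ‖ := norm_add_le _ _
      _ ≤ δ + Mf' := add_le_add (hh ζ hζ) hbf
      _ ≤ Mf' + 1 := by linarith
  calc ‖h ζ * k ζ - f ζ * g ζ‖ = ‖h ζ * (k ζ - g ζ) + (h ζ - f ζ) * g ζ‖ := by ring_nf
    _ ≤ ‖h ζ * (k ζ - g ζ)‖ + ‖(h ζ - f ζ) * g ζ‖ := norm_add_le _ _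
    _ = ‖h ζ‖ * ‖k ζ - g ζ‖ + ‖h ζ - f ζ‖ * ‖g ζ‖ := by rw [norm_mul, norm_mul]
    _ ≤ (Mf' + 1) * δ + δ * Mg' :=
        add_le_add (mul_le_mul hbh (hk ζ hζ) (norm_nonneg _) (by positivity))
          (mul_le_mul (hh ζ hζ) hbg (norm_nonneg _) hδ0.le)
    _ = (Mf' + Mg' + 1) * δ := by ring
    _ ≤ (Mf' + Mg' + 2) * (ε / (Mf' + Mg' + 2)) := by
        apply mul_le_mul (by linarith) hδ2 hδ0.le (by linarith)
    _ = ε := by field_simp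

theorem pow (hg : Approx Ω E g) {r : ℝ} (hr0 : 0 ≤ r)
    (hb : ∀ ζ ∈ E, ‖g ζ‖ ≤ r) (n : ℕ) : Approx Ω E (fun ζ => g ζ ^ n) := by
  induction n with
  | zero => exact of_diff (by simpa using differentiableOn_const (1:ℂ))
  | succ n ih =>
      have : Approx Ω E (fun ζ => g ζ ^ n * g ζ) :=
        ih.mul hg (Mf := r ^ n) (Mg := r)
          (fun ζ hζ => by rw [norm_pow]; exact pow_le_pow_left₀ (norm_nonneg _) (hb ζ hζ) n) hb
      exact this.congr (fun ζ _ => by ring)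

theorem geom (hg : Approx Ω E g) {r : ℝ} (hr0 : 0 ≤ r) (hr1 : r < 1)
    (hb : ∀ ζ ∈ E, ‖g ζ‖ ≤ r) : Approx Ω E (fun ζ => (1 - g ζ)⁻¹) := by
  apply of_close
  intro δ hδ
  obtain ⟨N, hN⟩ : ∃ N : ℕ, r ^ N < δ * (1 - r) :=
    exists_pow_lt_of_lt_one (mul_pos hδ (by linarith)) hr1
  refine ⟨fun ζ => ∑ n ∈ Finset.range N, g ζ ^ n, ?_, ?_⟩
  · -- the partial sum is approximable
    clear hN
    induction N with
    | zero => simpa using of_diff (differentiableOn_const (0:ℂ))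
    | succ n ih =>
        have := ih.add (hg.pow hr0 hb n)
        exact this.congr (fun ζ _ => by rw [Finset.sum_range_succ])
  · intro ζ hζ
    have hgr : ‖g ζ‖ ≤ r := hb ζ hζ
    have hne : (1:ℂ) - g ζ ≠ 0 := by
      intro h0
      have : (1:ℂ) = g ζ := by linear_combination h0
      rw [← this] at hgr
      simp at hgr; linarith
    have hnorm : 1 - r ≤ ‖(1:ℂ) - g ζ‖ := by
      have := norm_sub_norm_le (1:ℂ) (g ζ)
      simp only [norm_one] at this
      linarith
    have hx1 : g ζ ≠ 1 := fun h => hne (by rw [h]; ring)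
    have hsum : ∑ n ∈ Finset.range N, g ζ ^ n = (1 - g ζ ^ N) * (1 - g ζ)⁻¹ := by
      have := geom_sum_mul (g ζ) N
      field_simp
      linear_combination -this
    show ‖(∑ n ∈ Finset.range N, g ζ ^ n) - (1 - g ζ)⁻¹‖ ≤ δ
    rw [hsum]
    have : (1 - g ζ ^ N) * (1 - g ζ)⁻¹ - (1 - g ζ)⁻¹ = -(g ζ ^ N * (1 - g ζ)⁻¹) := by ring
    rw [this, norm_neg, norm_mul, norm_pow, norm_inv]
    have h1r : (0:ℝ) < 1 - r := by linarith
    have hnormpos : (0:ℝ) < ‖(1:ℂ) - g ζ‖ := lt_of_lt_of_le h1r hnorm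
    calc ‖g ζ‖ ^ N * ‖(1:ℂ) - g ζ‖⁻¹ ≤ r ^ N * (1 - r)⁻¹ := by
          gcongr
      _ ≤ δ := by
          have h2 : r ^ N * (1-r)⁻¹ < δ * (1-r) * (1-r)⁻¹ :=
            mul_lt_mul_of_pos_right hN (inv_pos.2 h1r)
          have h3 : δ * (1-r) * (1-r)⁻¹ = δ := by field_simp
          linarith

end Approx

section Push

variable {Ω E : Set ℂ}

/-- Pole pushing: if `1/(ζ-a)` is approximable and `b` is closer to `a` than `E` is,
then `1/(ζ-b)` is approximable. -/
theorem push (hE : IsCompact E) (hne : E.Nonempty) {a b : ℂ} (haE : a ∉ E)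
    (ha : Approx Ω E (fun ζ => (ζ - a)⁻¹)) (hab : ‖b - a‖ < infDist a E) :
    b ∉ E ∧ Approx Ω E (fun ζ => (ζ - b)⁻¹) := by
  have hd0 : 0 < infDist a E := (hE.isClosed.notMem_iff_infDist_pos hne).1 haE
  set d := infDist a E with hd
  have hbE : b ∉ E := by
    intro hb
    have : infDist a E ≤ dist a b := infDist_le_dist_of_mem hb
    rw [dist_eq_norm, ← norm_neg] at this
    simp only [neg_sub] at this
    linarith
  have hEd : ∀ ζ ∈ E, d ≤ ‖ζ - a‖ := by
    intro ζ hζ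
    have : infDist a E ≤ dist a ζ := infDist_le_dist_of_mem hζ
    rwa [dist_eq_norm, ← norm_neg, neg_sub] at this
  set g : ℂ → ℂ := fun ζ => (b - a) * (ζ - a)⁻¹ with hg
  set r : ℝ := ‖b - a‖ / d with hr
  have hr0 : 0 ≤ r := by positivity
  have hr1 : r < 1 := (div_lt_one hd0).2 hab
  have hgb : ∀ ζ ∈ E, ‖g ζ‖ ≤ r := by
    intro ζ hζ
    have hζa : (0:ℝ) < ‖ζ - a‖ := lt_of_lt_of_le hd0 (hEd ζ hζ)
    rw [hg]
    simp only [norm_mul, norm_inv]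
    rw [hr, div_eq_mul_inv]
    gcongr
    exact hEd ζ hζ
  have hga : Approx Ω E g := ha.const_mul (b - a)
  have hgeom : Approx Ω E (fun ζ => (1 - g ζ)⁻¹) := hga.geom hr0 hr1 hgb
  have hmul : Approx Ω E (fun ζ => (ζ - a)⁻¹ * (1 - g ζ)⁻¹) := by
    apply ha.mul hgeom (Mf := d⁻¹) (Mg := (1 - r)⁻¹)
    · intro ζ hζ
      rw [norm_inv]
      exact inv_anti₀ hd0 (hEd ζ hζ)
    · intro ζ hζ
      rw [norm_inv]
      have h1 : 1 - r ≤ ‖(1:ℂ) - g ζ‖ := by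
        have := norm_sub_norm_le (1:ℂ) (g ζ)
        simp only [norm_one] at this
        linarith [hgb ζ hζ]
      exact inv_anti₀ (by linarith) h1
  refine ⟨hbE, hmul.congr fun ζ hζ => ?_⟩
  have hζa : ζ - a ≠ 0 := by
    intro h0
    have : ζ = a := by linear_combination h0
    exact haE (this ▸ hζ)
  have hgζ : (1:ℂ) - g ζ ≠ 0 := by
    intro h0
    have h1 : ‖(1:ℂ) - g ζ‖ = 0 := by rw [h0]; simp
    have h2 : 1 - r ≤ ‖(1:ℂ) - g ζ‖ := by
      have := norm_sub_norm_le (1:ℂ) (g ζ)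
      simp only [norm_one] at this
      linarith [hgb ζ hζ]
    rw [h1] at h2; linarith
  have hζb : ζ - b ≠ 0 := by
    intro h0
    have : ζ = b := by linear_combination h0
    exact hbE (this ▸ hζ)
  rw [hg]
  field_simp
  rw [show ζ - a - (b - a) = ζ - b by ring]; exact div_self hζb

/-- Far points: if `‖a‖` is large compared to a norm bound on `E`,
then `1/(ζ-a)` is approximable (even by entire functions). -/
theorem far {R : ℝ} (hR0 : 0 ≤ R) (hR : ∀ ζ ∈ E, ‖ζ‖ ≤ R) {a : ℂ}
    (ha : 2 * R + 1 ≤ ‖a‖) : a ∉ E ∧ Approx Ω E (fun ζ => (ζ - a)⁻¹) := by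
  have haE : a ∉ E := by
    intro h
    have := hR a h
    linarith
  have ha0 : a ≠ 0 := by
    intro h
    rw [h] at ha; simp at ha; linarith
  set g : ℂ → ℂ := fun ζ => a⁻¹ * ζ with hg
  set r : ℝ := R / (2 * R + 1) with hr
  have hden : (0:ℝ) < 2 * R + 1 := by linarith
  have hr0 : 0 ≤ r := by positivity
  have hr1 : r < 1 := by
    rw [hr, div_lt_one hden]; linarith
  have hgb : ∀ ζ ∈ E, ‖g ζ‖ ≤ r := by
    intro ζ hζ
    rw [hg]
    simp only [norm_mul, norm_inv]
    rw [hr]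
    have hnorm : (0:ℝ) < ‖a‖ := by linarith
    calc ‖a‖⁻¹ * ‖ζ‖ ≤ (2*R+1)⁻¹ * R :=
          mul_le_mul (inv_anti₀ hden ha) (hR ζ hζ) (norm_nonneg _) (by positivity)
      _ = R / (2*R+1) := by ring
  have hga : Approx Ω E g :=
    Approx.of_diff ((differentiableOn_const _).mul differentiableOn_id)
  have hgeom : Approx Ω E (fun ζ => (1 - g ζ)⁻¹) := hga.geom hr0 hr1 hgb
  refine ⟨haE, (hgeom.const_mul (-a⁻¹)).congr fun ζ hζ => ?_⟩
  have hgζ : (1:ℂ) - g ζ ≠ 0 := by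
    intro h0
    have h1 : ‖(1:ℂ) - g ζ‖ = 0 := by rw [h0]; simp
    have h2 : 1 - r ≤ ‖(1:ℂ) - g ζ‖ := by
      have := norm_sub_norm_le (1:ℂ) (g ζ)
      simp only [norm_one] at this
      linarith [hgb ζ hζ]
    rw [h1] at h2; linarith
  have hζa : ζ - a ≠ 0 := by
    intro h0
    have : ζ = a := by linear_combination h0
    exact haE (this ▸ hζ)
  rw [hg] at hgζ ⊢
  have key : ζ - a = -a * (1 - a⁻¹ * ζ) := by field_simp; ring
  rw [key, mul_inv, inv_neg]

end Push

/-- A compact set `E ⊆ Ω ⊆ ℂ` is holomorphically convex in `Ω` iff no bounded connected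
component of `ℂ \ E` is contained in `Ω`. -/
theorem stmt8 (Ω : Set ℂ) (hΩ : IsOpen Ω) (E : Set ℂ) (hE : IsCompact E) (hEΩ : E ⊆ Ω) :
    holHull Ω E = E ↔
      ∀ z ∉ E, Bornology.IsBounded (connectedComponentIn Eᶜ z) →
        ¬ connectedComponentIn Eᶜ z ⊆ Ω := by
  have hEc : IsOpen Eᶜ := hE.isClosed.isOpen_compl
  constructor
  · -- if hull = E, no bounded component of the complement is inside Ω
    intro hhull z hz hbd hsub
    set U := connectedComponentIn Eᶜ z with hU
    have hzU : z ∈ U := mem_connectedComponentIn hz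
    have hUopen : IsOpen U := hEc.connectedComponentIn
    have hfr : frontier U ⊆ E := by
      intro x hx
      by_contra hxE
      have hxc : x ∈ Eᶜ := hxE
      have hxcl : x ∈ closure U := hx.1
      have hVopen : IsOpen (connectedComponentIn Eᶜ x) := hEc.connectedComponentIn
      have hxV : x ∈ connectedComponentIn Eᶜ x := mem_connectedComponentIn hxc
      obtain ⟨y, hyV, hyU⟩ := mem_closure_iff.1 hxcl _ hVopen hxV
      have h1 : connectedComponentIn Eᶜ x = connectedComponentIn Eᶜ y :=
        connectedComponentIn_eq hyV
      have h2 : U = connectedComponentIn Eᶜ y := connectedComponentIn_eq hyU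
      have hxU : x ∈ U := by rw [h2, ← h1]; exact hxV
      exact hx.2 (by rwa [hUopen.interior_eq])
    have hclU : closure U ⊆ Ω := by
      rw [closure_eq_self_union_frontier U]
      exact Set.union_subset hsub (hfr.trans hEΩ)
    have hzhull : z ∈ holHull Ω E := by
      refine ⟨hsub hzU, fun h hd => ?_⟩
      have hbdd : BddAbove ((fun w => ‖h w‖) '' E) :=
        (hE.image_of_continuousOn ((hd.continuousOn.mono hEΩ).norm)).bddAbove
      apply Complex.norm_le_of_forall_mem_frontier_norm_le hbd
        ⟨hd.mono hsub, hd.continuousOn.mono hclU⟩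
        (fun x hx => le_csSup hbdd (Set.mem_image_of_mem _ (hfr hx)))
        (subset_closure hzU)
    rw [hhull] at hzhull
    exact hz hzhull
  · -- conversely, if no bad component exists, then hull = E
    intro hcomp
    apply Set.Subset.antisymm
    · intro z hzhull
      by_contra hzE
      rcases E.eq_empty_or_nonempty with hEe | hne
      · -- E empty: constant 1 violates the hull condition
        have := hzhull.2 (fun _ => 1) (differentiableOn_const 1)
        rw [hEe] at this
        simp [Real.sSup_empty] at this
        linarith
      -- E nonempty
      obtain ⟨R₀, hR₀⟩ := hE.isBounded.exists_norm_le
      set R := max R₀ 0 with hRdef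
      have hR0 : (0:ℝ) ≤ R := le_max_right _ _
      have hR : ∀ ζ ∈ E, ‖ζ‖ ≤ R := fun ζ hζ => (hR₀ ζ hζ).trans (le_max_left _ _)
      set F : Set ℂ := {a | a ∉ E ∧ Approx Ω E (fun ζ => (ζ - a)⁻¹)} with hF
      -- z is not in F
      have hzF : z ∉ F := by
        rintro ⟨-, happ⟩
        set C := R + ‖z‖ with hC
        have hC0 : (0:ℝ) ≤ C := by positivity
        obtain ⟨h, hd, hh⟩ := happ (1 / (2 * (C + 1))) (by positivity)
        set g : ℂ → ℂ := fun ζ => (ζ - z) * h ζ - 1 with hg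
        have hgd : DifferentiableOn ℂ g Ω :=
          ((differentiableOn_id.sub (differentiableOn_const z)).mul hd).sub
            (differentiableOn_const 1)
        have hbound := hzhull.2 g hgd
        have hgz : ‖g z‖ = 1 := by rw [hg]; simp
        have hgE : ∀ ζ ∈ E, ‖g ζ‖ ≤ 1/2 := by
          intro ζ hζ
          have hζz : ζ - z ≠ 0 := by
            intro h0
            have : ζ = z := by linear_combination h0
            exact hzE (this ▸ hζ)
          have heq : g ζ = (ζ - z) * (h ζ - (ζ - z)⁻¹) := by
            rw [hg]
            field_simp
          rw [heq, norm_mul]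
          have hζC : ‖ζ - z‖ ≤ C := by
            calc ‖ζ - z‖ ≤ ‖ζ‖ + ‖z‖ := norm_sub_le _ _
              _ ≤ R + ‖z‖ := by linarith [hR ζ hζ]
          calc ‖ζ - z‖ * ‖h ζ - (ζ - z)⁻¹‖ ≤ (C + 1) * (1 / (2 * (C + 1))) := by
                apply mul_le_mul (by linarith) (hh ζ hζ) (norm_nonneg _) (by positivity)
            _ = 1/2 := by field_simp
        have hsup : sSup ((fun w => ‖g w‖) '' E) ≤ 1/2 := by
          apply Real.sSup_le
          · rintro x ⟨ζ, hζ, rfl⟩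
            exact hgE ζ hζ
          · norm_num
        rw [hgz] at hbound
        linarith
      -- the component of z misses F
      set U := connectedComponentIn Eᶜ z with hU
      have hzc : z ∈ Eᶜ := hzE
      have hzU : z ∈ U := mem_connectedComponentIn hzc
      have hUE : U ⊆ Eᶜ := connectedComponentIn_subset _ _
      -- F is open
      have hFopen : IsOpen F := by
        rw [Metric.isOpen_iff]
        rintro a ⟨haE, happ⟩
        have hd0 : 0 < infDist a E := (hE.isClosed.notMem_iff_infDist_pos hne).1 haE
        refine ⟨infDist a E, hd0, fun b hb => ?_⟩
        rw [mem_ball, dist_eq_norm] at hb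
        exact push hE hne haE happ hb
      -- the complement of F within Eᶜ is open
      have hGopen : IsOpen (Eᶜ \ F) := by
        rw [Metric.isOpen_iff]
        rintro a ⟨haE, haF⟩
        have haE' : a ∉ E := haE
        have hd0 : 0 < infDist a E := (hE.isClosed.notMem_iff_infDist_pos hne).1 haE'
        refine ⟨infDist a E / 2, by positivity, fun b hb => ?_⟩
        rw [mem_ball, dist_eq_norm] at hb
        have hbE : b ∉ E := by
          intro hbmem
          have h1 : infDist a E ≤ dist a b := infDist_le_dist_of_mem hbmem
          rw [dist_eq_norm, ← norm_neg, neg_sub] at h1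
          linarith
        refine ⟨hbE, fun hbF => haF ?_⟩
        -- push from b back to a
        have hdb : infDist a E - ‖b - a‖ ≤ infDist b E := by
          have h1 : infDist a E ≤ infDist b E + dist a b :=
            (infDist_le_infDist_add_dist)
          rw [dist_eq_norm, ← norm_neg, neg_sub] at h1
          linarith
        have hab : ‖a - b‖ < infDist b E := by
          rw [← norm_neg, neg_sub]
          linarith
        exact push hE hne hbF.1 hbF.2 hab
      -- by connectedness, U ∩ F = ∅
      have hUF : ∀ a ∈ U, a ∉ F := by
        by_contra hcon
        push_neg at hcon
        obtain ⟨a, haU, haF⟩ := hcon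
        have hpre : IsPreconnected U := isPreconnected_connectedComponentIn
        have hcover : U ⊆ F ∪ (Eᶜ \ F) := by
          intro x hx
          by_cases hxF : x ∈ F
          · exact Or.inl hxF
          · exact Or.inr ⟨hUE hx, hxF⟩
        obtain ⟨x, hx⟩ := hpre F (Eᶜ \ F) hFopen hGopen hcover ⟨a, haU, haF⟩ ⟨z, hzU, hzc, hzF⟩
        exact hx.2.2.2 hx.2.1
      -- U is bounded
      have hbd : Bornology.IsBounded U := by
        apply (Metric.isBounded_closedBall (x := (0:ℂ)) (r := 2*R+1)).subset
        intro a haU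
        rw [mem_closedBall, dist_eq_norm, sub_zero]
        by_contra hnorm
        push_neg at hnorm
        exact hUF a haU (far hR0 hR hnorm.le)
      -- U ⊆ Ω
      have hsub : U ⊆ Ω := by
        intro a haU
        by_contra haΩ
        apply hUF a haU
        refine ⟨hUE haU, Approx.of_diff ?_⟩
        intro ζ hζ
        have hζa : ζ - a ≠ 0 := by
          intro h0
          have : ζ = a := by linear_combination h0
          exact haΩ (this ▸ hζ)
        exact ((differentiableAt_id.sub_const a).inv hζa).differentiableWithinAt
      exact hcomp z hzE hbd hsub
    · -- E ⊆ hull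
      intro z hz
      refine ⟨hEΩ hz, fun h hd => ?_⟩
      have hbdd : BddAbove ((fun w => ‖h w‖) '' E) :=
        (hE.image_of_continuousOn ((hd.continuousOn.mono hEΩ).norm)).bddAbove
      exact le_csSup hbdd (Set.mem_image_of_mem _ hz)
end

section
/- Let E be a compact subset of an open set Ω ⊆ ℂ. Then the holomorphic hull Ê_Ω equals E together with the union of all bounded connected components of ℂ \ E that are contained in Ω. -/
open Set Metric Bornology Finset

namespace Stmt9Aux

/-- Uniform approximability on `K` by functions holomorphic on `Ω`. -/
def Apx (Ω K : Set ℂ) (f : ℂ → ℂ) : Prop :=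
  ∀ ε : ℝ, 0 < ε → ∃ h : ℂ → ℂ, DifferentiableOn ℂ h Ω ∧ ∀ w ∈ K, ‖h w - f w‖ ≤ ε

lemma apx_of_diff {Ω K : Set ℂ} {f : ℂ → ℂ} (hf : DifferentiableOn ℂ f Ω) : Apx Ω K f :=
  fun ε hε => ⟨f, hf, fun w _ => by simp [le_of_lt hε]⟩

lemma apx_limit {Ω K : Set ℂ} {F : ℂ → ℂ}
    (h : ∀ ε : ℝ, 0 < ε → ∃ f, Apx Ω K f ∧ ∀ w ∈ K, ‖f w - F w‖ ≤ ε) :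
    Apx Ω K F := by
  intro ε hε
  obtain ⟨f, hf, hfF⟩ := h (ε / 2) (by positivity)
  obtain ⟨g, hg, hgf⟩ := hf (ε / 2) (by positivity)
  refine ⟨g, hg, fun w hw => ?_⟩
  calc ‖g w - F w‖ = ‖(g w - f w) + (f w - F w)‖ := by rw [sub_add_sub_cancel]
    _ ≤ ‖g w - f w‖ + ‖f w - F w‖ := norm_add_le _ _
    _ ≤ ε / 2 + ε / 2 := add_le_add (hgf w hw) (hfF w hw)
    _ = ε := by ring

lemma apx_add {Ω K : Set ℂ} {f g : ℂ → ℂ} (hf : Apx Ω K f) (hg : Apx Ω K g) :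
    Apx Ω K (fun w => f w + g w) := by
  intro ε hε
  obtain ⟨h, hh, hhf⟩ := hf (ε / 2) (by positivity)
  obtain ⟨k, hk, hkg⟩ := hg (ε / 2) (by positivity)
  refine ⟨fun w => h w + k w, hh.add hk, fun w hw => ?_⟩
  calc ‖h w + k w - (f w + g w)‖ = ‖(h w - f w) + (k w - g w)‖ := by ring_nf
    _ ≤ ‖h w - f w‖ + ‖k w - g w‖ := norm_add_le _ _
    _ ≤ ε / 2 + ε / 2 := add_le_add (hhf w hw) (hkg w hw)
    _ = ε := by ring

lemma apx_const_mul {Ω K : Set ℂ} {f : ℂ → ℂ} (c : ℂ) (hf : Apx Ω K f) :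
    Apx Ω K (fun w => c * f w) := by
  intro ε hε
  obtain ⟨h, hh, hhf⟩ := hf (ε / (‖c‖ + 1)) (by positivity)
  refine ⟨fun w => c * h w, hh.const_mul c, fun w hw => ?_⟩
  have h1 : ‖c * h w - c * f w‖ = ‖c‖ * ‖h w - f w‖ := by
    rw [← mul_sub, norm_mul]
  rw [h1]
  have hc1 : (0:ℝ) < ‖c‖ + 1 := by positivity
  calc ‖c‖ * ‖h w - f w‖ ≤ (‖c‖ + 1) * (ε / (‖c‖ + 1)) := by
        apply mul_le_mul (by linarith [norm_nonneg c]) (hhf w hw) (norm_nonneg _) (by positivity)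
    _ = ε := by field_simp
  
lemma norm_pow_sub_pow' (a b : ℂ) (M : ℝ) (hM : 1 ≤ M) (ha : ‖a‖ ≤ M) (hb : ‖b‖ ≤ M) (n : ℕ) :
    ‖a ^ n - b ^ n‖ ≤ n * M ^ n * ‖a - b‖ := by
  have hM0 : (0:ℝ) ≤ M := le_trans zero_le_one hM
  induction n with
  | zero => simp
  | succ n ih =>
    have key : a ^ (n + 1) - b ^ (n + 1) = a * (a ^ n - b ^ n) + (a - b) * b ^ n := by ring
    have hMn : M ^ n ≤ M ^ (n + 1) := by
      calc M ^ n = 1 * M ^ n := by ring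
        _ ≤ M * M ^ n := by gcongr
        _ = M ^ (n + 1) := by ring
    calc ‖a ^ (n + 1) - b ^ (n + 1)‖ = ‖a * (a ^ n - b ^ n) + (a - b) * b ^ n‖ := by rw [key]
      _ ≤ ‖a‖ * ‖a ^ n - b ^ n‖ + ‖a - b‖ * ‖b‖ ^ n := by
          refine (norm_add_le _ _).trans ?_
          rw [norm_mul, norm_mul, norm_pow]
      _ ≤ M * (n * M ^ n * ‖a - b‖) + ‖a - b‖ * M ^ n := by
          refine add_le_add (mul_le_mul ha ih (norm_nonneg _) hM0) ?_
          exact mul_le_mul_of_nonneg_left (pow_le_pow_left₀ (norm_nonneg b) hb n) (norm_nonneg _)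
      _ = (n * (M ^ (n + 1) * ‖a - b‖)) + M ^ n * ‖a - b‖ := by ring
      _ ≤ (n * (M ^ (n + 1) * ‖a - b‖)) + M ^ (n + 1) * ‖a - b‖ :=
          add_le_add (le_refl _) (mul_le_mul_of_nonneg_right hMn (norm_nonneg _))
      _ = (n + 1 : ℕ) * M ^ (n + 1) * ‖a - b‖ := by push_cast; ring

lemma apx_pow {Ω K : Set ℂ} {f : ℂ → ℂ} (hf : Apx Ω K f) {M : ℝ}
    (hM : ∀ w ∈ K, ‖f w‖ ≤ M) (n : ℕ) :
    Apx Ω K (fun w => (f w) ^ n) := by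
  intro ε hε
  set M' : ℝ := max M 0 + 1 with hM'
  have hM'1 : 1 ≤ M' := by
    have := le_max_right M 0; simp only [hM']; linarith
  have hM'0 : (0:ℝ) < M' := lt_of_lt_of_le one_pos hM'1
  have hpow : (0:ℝ) < (n + 1) * M' ^ n := by positivity
  set η : ℝ := min 1 (ε / ((n + 1) * M' ^ n)) with hη
  have hη0 : 0 < η := lt_min one_pos (by positivity)
  obtain ⟨h, hh, hhf⟩ := hf η hη0
  refine ⟨fun w => (h w) ^ n, hh.pow n, fun w hw => ?_⟩
  have hfM : ‖f w‖ ≤ M' := le_trans (hM w hw) (by simp only [hM']; linarith [le_max_left M 0])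
  have hhM : ‖h w‖ ≤ M' := by
    calc ‖h w‖ = ‖(h w - f w) + f w‖ := by ring_nf
      _ ≤ ‖h w - f w‖ + ‖f w‖ := norm_add_le _ _
      _ ≤ η + ‖f w‖ := by linarith [hhf w hw]
      _ ≤ 1 + (max M 0) := by
          have : η ≤ 1 := min_le_left _ _
          have : ‖f w‖ ≤ max M 0 := le_trans (hM w hw) (le_max_left M 0)
          linarith [min_le_left (1:ℝ) (ε / ((n + 1) * M' ^ n))]
      _ = M' := by rw [hM']; ring
  have hMn0 : (0:ℝ) ≤ M' ^ n := pow_nonneg (le_of_lt hM'0) n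
  have hstep : (n:ℝ) * M' ^ n * η ≤ ((n:ℝ) + 1) * M' ^ n * (ε / (((n:ℝ) + 1) * M' ^ n)) := by
    refine mul_le_mul ?_ (min_le_right _ _) (le_of_lt hη0) (by positivity)
    have hn1 : (n:ℝ) ≤ (n:ℝ) + 1 := by linarith
    exact mul_le_mul_of_nonneg_right hn1 hMn0
  have heq : ((n:ℝ) + 1) * M' ^ n * (ε / (((n:ℝ) + 1) * M' ^ n)) = ε := by
    field_simp
  calc ‖(h w) ^ n - (f w) ^ n‖ ≤ n * M' ^ n * ‖h w - f w‖ :=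
        norm_pow_sub_pow' _ _ _ hM'1 hhM hfM n
    _ ≤ n * M' ^ n * η := by
        have := hhf w hw
        have : (0:ℝ) ≤ (n:ℝ) * M' ^ n := by positivity
        nlinarith [hhf w hw]
    _ ≤ ε := le_of_le_of_eq hstep heq

lemma apx_sum {Ω K : Set ℂ} {ι : Type*} (s : Finset ι) (f : ι → ℂ → ℂ)
    (h : ∀ i ∈ s, Apx Ω K (f i)) : Apx Ω K (fun w => ∑ i ∈ s, f i w) := by
  induction s using Finset.cons_induction with
  | empty => simpa using apx_of_diff (differentiableOn_const 0)
  | cons i s his ih =>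
    have h1 : Apx Ω K (f i) := h i (Finset.mem_cons_self i s)
    have h2 : Apx Ω K (fun w => ∑ j ∈ s, f j w) := ih (fun j hj => h j (Finset.mem_cons_of_mem hj))
    have := apx_add h1 h2
    simpa [Finset.sum_cons] using this

lemma aux_id (N : ℕ) (x y t : ℂ) (hx : x ≠ 0) (hy : y ≠ 0) (h : t - 1 = -y * x) :
    x * (t ^ N - 1) / (t - 1) - y⁻¹ = -(t ^ N) * y⁻¹ := by
  rw [h]
  field_simp
  ring

lemma apx_step {Ω K : Set ℂ} {a a' : ℂ} {d d' : ℝ} (hd : 0 < d) (hd' : 0 < d')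
    (hKa : ∀ w ∈ K, d ≤ ‖w - a‖) (hKa' : ∀ w ∈ K, d' ≤ ‖w - a'‖)
    (hq : 2 * ‖a' - a‖ ≤ d)
    (hA : Apx Ω K (fun w => (w - a)⁻¹)) : Apx Ω K (fun w => (w - a')⁻¹) := by
  refine apx_limit (fun ε hε => ?_)
  obtain ⟨N, hN⟩ : ∃ N : ℕ, (1 / 2 : ℝ) ^ N / d' ≤ ε := by
    obtain ⟨N, hN⟩ := exists_pow_lt_of_lt_one (mul_pos hε hd') (by norm_num : (1 / 2 : ℝ) < 1)
    exact ⟨N, by rw [div_le_iff₀ hd']; linarith⟩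
  have hbd : ∀ w ∈ K, ‖(w - a)⁻¹‖ ≤ 1 / d := by
    intro w hw
    rw [norm_inv, one_div]
    exact inv_anti₀ hd (hKa w hw)
  refine ⟨fun w => ∑ n ∈ Finset.range N, (a' - a) ^ n * ((w - a)⁻¹) ^ (n + 1), ?_, ?_⟩
  · exact apx_sum _ _ (fun n _ => apx_const_mul _ (apx_pow hA hbd (n + 1)))
  intro w hw
  have hwa : w - a ≠ 0 := by
    intro h
    have := hKa w hw; rw [h] at this; simp at this; linarith
  have hwa' : w - a' ≠ 0 := by
    intro h
    have := hKa' w hw; rw [h] at this; simp at this; linarith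
  set q : ℂ := a' - a with hqdef
  set x : ℂ := (w - a)⁻¹ with hxdef
  have hx : ‖x‖ ≤ 1 / d := hbd w hw
  have hqx : ‖q * x‖ ≤ 1 / 2 := by
    rw [norm_mul]
    calc ‖q‖ * ‖x‖ ≤ (d / 2) * (1 / d) := by
          apply mul_le_mul (by linarith) hx (norm_nonneg _) (by linarith)
      _ = 1 / 2 := by field_simp
  have hqx1 : q * x ≠ 1 := by
    intro h
    rw [h] at hqx; norm_num at hqx
  have hsum : ∑ n ∈ Finset.range N, q ^ n * x ^ (n + 1)
      = x * ((q * x) ^ N - 1) / (q * x - 1) := by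
    rw [mul_div_assoc, ← geom_sum_eq hqx1, Finset.mul_sum]
    congr 1; ext n; rw [mul_pow]; ring
  have hx0 : x ≠ 0 := inv_ne_zero hwa
  have h1 : q * x - 1 = -(w - a') * x := by
    rw [hxdef, hqdef]
    field_simp
    ring
  have hiden : x * ((q * x) ^ N - 1) / (q * x - 1) - (w - a')⁻¹
      = -((q * x) ^ N) * (w - a')⁻¹ :=
    aux_id N x (w - a') (q * x) hx0 hwa' h1
  have hβ : (fun w => ∑ n ∈ Finset.range N, q ^ n * (w - a)⁻¹ ^ (n + 1)) w
      - (w - a')⁻¹ = (∑ n ∈ Finset.range N, q ^ n * x ^ (n + 1)) - (w - a')⁻¹ := rfl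
  rw [hβ, hsum, hiden]
  rw [norm_mul, norm_neg, norm_pow, norm_inv]
  calc ‖q * x‖ ^ N * ‖w - a'‖⁻¹ ≤ (1 / 2) ^ N * (1 / d') := by
        apply mul_le_mul (pow_le_pow_left₀ (norm_nonneg _) hqx N) _ (by positivity) (by positivity)
        rw [← one_div]
        exact one_div_le_one_div_of_le hd' (hKa' w hw)
    _ = (1 / 2 : ℝ) ^ N / d' := by ring
    _ ≤ ε := hN

lemma apx_unbounded {Ω K : Set ℂ} {b : ℂ} {R : ℝ} (hR : 0 ≤ R)
    (hK : ∀ w ∈ K, ‖w‖ ≤ R) (hb : 2 * R + 1 ≤ ‖b‖) :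
    Apx Ω K (fun w => (w - b)⁻¹) := by
  intro ε hε
  obtain ⟨N, hN⟩ : ∃ N : ℕ, (1 / 2 : ℝ) ^ N ≤ ε := by
    obtain ⟨N, hN⟩ := exists_pow_lt_of_lt_one hε (by norm_num : (1 / 2 : ℝ) < 1)
    exact ⟨N, le_of_lt hN⟩
  have hb0 : b ≠ 0 := by
    intro h; rw [h] at hb; simp at hb; linarith
  refine ⟨fun w => -∑ n ∈ Finset.range N, w ^ n * (b ^ (n + 1))⁻¹, ?_, ?_⟩
  · apply DifferentiableOn.neg
    apply DifferentiableOn.fun_sum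
    intro n _
    exact ((differentiable_pow n).differentiableOn).mul_const _
  intro w hw
  have hwb : w - b ≠ 0 := by
    intro h
    have h1 : ‖w‖ = ‖b‖ := by rw [sub_eq_zero] at h; rw [h]
    have := hK w hw; rw [h1] at this; linarith
  have hs : ‖w / b‖ ≤ 1 / 2 := by
    rw [norm_div]
    rw [div_le_div_iff₀ (lt_of_lt_of_le (by linarith) hb) (by norm_num : (0:ℝ) < 2)]
    have := hK w hw
    linarith
  have hs1 : w / b ≠ 1 := by
    intro h; rw [h] at hs; norm_num at hs
  have hsum : ∑ n ∈ Finset.range N, w ^ n * (b ^ (n + 1))⁻¹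
      = b⁻¹ * (((w / b) ^ N - 1) / (w / b - 1)) := by
    rw [← geom_sum_eq hs1, Finset.mul_sum]
    congr 1; ext n
    rw [div_pow, pow_succ, mul_inv, div_eq_mul_inv]
    ring
  have hiden : -(b⁻¹ * (((w / b) ^ N - 1) / (w / b - 1))) - (w - b)⁻¹
      = -((w / b) ^ N) * (w - b)⁻¹ := by
    have hne : w / b - 1 ≠ 0 := sub_ne_zero.mpr hs1
    field_simp
    ring
  have hwb1 : (1:ℝ) ≤ ‖w - b‖ := by
    have h1 : ‖b‖ - ‖w‖ ≤ ‖b - w‖ := norm_sub_norm_le b w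
    rw [norm_sub_rev b w] at h1
    have := hK w hw
    linarith
  have hβ : (fun w => -∑ n ∈ Finset.range N, w ^ n * (b ^ (n + 1))⁻¹) w - (fun w => (w - b)⁻¹) w
      = -(∑ n ∈ Finset.range N, w ^ n * (b ^ (n + 1))⁻¹) - (w - b)⁻¹ := rfl
  rw [hβ, hsum, hiden, norm_mul, norm_neg, norm_pow, norm_inv]
  calc ‖w / b‖ ^ N * ‖w - b‖⁻¹ ≤ (1 / 2) ^ N * 1 := by
        apply mul_le_mul (pow_le_pow_left₀ (norm_nonneg _) hs N) _ (by positivity) (by positivity)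
        rw [inv_le_one_iff₀]
        right; exact hwb1
    _ = (1 / 2 : ℝ) ^ N := by ring
    _ ≤ ε := hN

end Stmt9Aux

open Stmt9Aux

/-- The holomorphic hull of a compact `E ⊆ Ω` equals `E` together with all bounded
connected components of `ℂ \ E` contained in `Ω`. -/
theorem stmt9 (Ω : Set ℂ) (hΩ : IsOpen Ω) (E : Set ℂ) (hE : IsCompact E) (hEΩ : E ⊆ Ω) :
    holHull Ω E =
      E ∪ {z | z ∉ E ∧ Bornology.IsBounded (connectedComponentIn Eᶜ z) ∧
        connectedComponentIn Eᶜ z ⊆ Ω} := by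
  have hEc : IsClosed E := hE.isClosed
  have hbdd : ∀ h : ℂ → ℂ, DifferentiableOn ℂ h Ω → BddAbove ((fun w => ‖h w‖) '' E) :=
    fun h hh => (hE.image_of_continuousOn ((hh.continuousOn.mono hEΩ).norm)).bddAbove
  ext z
  simp only [holHull, mem_setOf_eq, mem_union, mem_sep_iff]
  constructor
  · rintro ⟨hzΩ, hz⟩
    by_cases hzE : z ∈ E
    · exact Or.inl hzE
    right
    refine ⟨hzE, ?_⟩
    by_contra hbad
    set U := connectedComponentIn Eᶜ z with hUdef
    have hzU : z ∈ U := mem_connectedComponentIn hzE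
    have hUE : U ⊆ Eᶜ := connectedComponentIn_subset _ _
    have hUpc : IsPreconnected U := isPreconnected_connectedComponentIn
    -- E is nonempty
    rcases E.eq_empty_or_nonempty with rfl | hEne
    · have h1 := hz (fun _ => 1) (differentiableOn_const 1)
      simp [Real.sSup_empty] at h1
      linarith
    set K' : Set ℂ := insert z E with hK'def
    have hK'c : IsCompact K' := hE.insert z
    have hK'cl : IsClosed K' := hK'c.isClosed
    have hK'ne : K'.Nonempty := ⟨z, mem_insert z E⟩
    have hEK' : E ⊆ K' := subset_insert z E
    have hzK' : z ∈ K' := mem_insert z E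
    -- distance from z to E
    have hd : 0 < infDist z E := (hEc.notMem_iff_infDist_pos hEne).mp hzE
    set d : ℝ := infDist z E with hddef
    -- the approximable set
    set A : Set ℂ := {a | a ∉ K' ∧ Apx Ω K' (fun w => (w - a)⁻¹)} with hAdef
    set B : Set ℂ := {a | a ∉ K' ∧ ¬ Apx Ω K' (fun w => (w - a)⁻¹)} with hBdef
    -- infDist positivity for points off K'
    have hinf : ∀ a : ℂ, a ∉ K' → 0 < infDist a K' :=
      fun a ha => (hK'cl.notMem_iff_infDist_pos hK'ne).mp ha
    have hinfle : ∀ (a : ℂ), ∀ w ∈ K', infDist a K' ≤ ‖w - a‖ := by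
      intro a w hw
      rw [← norm_sub_rev, ← dist_eq_norm]
      exact infDist_le_dist_of_mem hw
    -- step between nearby points
    have step' : ∀ a a' : ℂ, a ∉ K' → a' ∉ K' → 2 * ‖a' - a‖ ≤ infDist a K' →
        Apx Ω K' (fun w => (w - a)⁻¹) → Apx Ω K' (fun w => (w - a')⁻¹) := by
      intro a a' ha ha' hle hA
      have hda := hinf a ha
      refine apx_step hda (by linarith [hda] : (0:ℝ) < infDist a K' / 2)
        (hinfle a) ?_ hle hA
      intro w hw
      have h1 := hinfle a w hw
      have h2 : ‖w - a‖ - ‖a' - a‖ ≤ ‖w - a'‖ := by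
        have := norm_sub_norm_le (w - a) (a' - a)
        have he : (w - a) - (a' - a) = w - a' := by ring
        rw [he] at this
        linarith
      linarith
    have hAopen : IsOpen A := by
      rw [Metric.isOpen_iff]
      intro a ha
      have hda := hinf a ha.1
      refine ⟨infDist a K' / 3, by linarith, fun a' ha' => ?_⟩
      rw [mem_ball, dist_eq_norm] at ha'
      have ha'K : a' ∉ K' := by
        intro hmem
        have := hinfle a a' hmem
        linarith
      exact ⟨ha'K, step' a a' ha.1 ha'K (by linarith) ha.2⟩
    have hBopen : IsOpen B := by
      rw [Metric.isOpen_iff]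
      intro a ha
      have hda := hinf a ha.1
      refine ⟨infDist a K' / 3, by linarith, fun a' ha' => ?_⟩
      rw [mem_ball, dist_eq_norm] at ha'
      have ha'K : a' ∉ K' := by
        intro hmem
        have := hinfle a a' hmem
        linarith
      refine ⟨ha'K, fun hApx => ha.2 ?_⟩
      have hd'a : infDist a K' ≤ infDist a' K' + dist a a' := infDist_le_infDist_add_dist
      rw [dist_eq_norm] at hd'a
      have : 2 * ‖a - a'‖ ≤ infDist a' K' := by
        have h1 : ‖a - a'‖ = ‖a' - a‖ := norm_sub_rev a a'
        linarith
      exact step' a' a ha'K ha.1 this hApx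
    -- find a base point b ∈ U ∩ A
    have hbase : ∃ b ∈ U, b ∈ A := by
      rw [not_and_or] at hbad
      rcases hbad with hnb | hns
      · -- U unbounded
        obtain ⟨R, hR⟩ := isBounded_iff_forall_norm_le.mp hK'c.isBounded
        have hR' : ∀ w ∈ K', ‖w‖ ≤ max R 0 := fun w hw => le_trans (hR w hw) (le_max_left R 0)
        have hMR : (0:ℝ) ≤ max R 0 := le_max_right R 0
        obtain ⟨b, hbU, hbn⟩ : ∃ b ∈ U, 2 * max R 0 + 1 < ‖b‖ := by
          by_contra hc
          push_neg at hc
          exact hnb (isBounded_iff_forall_norm_le.mpr ⟨2 * max R 0 + 1, fun x hx => (hc x hx)⟩)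
        have hbK : b ∉ K' := fun hmem => by
          have := hR' b hmem; linarith
        exact ⟨b, hbU, hbK, apx_unbounded hMR hR' (le_of_lt hbn)⟩
      · -- U not contained in Ω
        obtain ⟨b, hbU, hbΩ⟩ : ∃ b ∈ U, b ∉ Ω := not_subset.mp hns
        have hbK : b ∉ K' := by
          intro hmem
          rcases hmem with rfl | hmem
          · exact hbΩ hzΩ
          · exact hUE hbU hmem
        refine ⟨b, hbU, hbK, apx_of_diff ?_⟩
        refine DifferentiableOn.inv ((differentiable_id.sub_const b).differentiableOn) ?_
        intro x hx hx0
        rw [sub_eq_zero] at hx0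
        exact hbΩ (hx0 ▸ hx)
    obtain ⟨b, hbU, hbA⟩ := hbase
    -- choose δ
    set δ : ℝ := d / (2 * d + 3) with hδdef
    have hδ0 : 0 < δ := by positivity
    have hδd : δ ≤ d / 2 := by
      rw [hδdef, div_le_div_iff₀ (by linarith) (by norm_num)]
      nlinarith
    -- find a ∈ A close to z
    have hkey : ∃ a ∈ A, dist a z < δ := by
      by_contra hc
      push_neg at hc
      have hsub : U ⊆ A ∪ (B ∪ Metric.ball z δ) := by
        intro w hw
        by_cases hwz : w = z
        · exact Or.inr (Or.inr (by rw [hwz]; exact Metric.mem_ball_self hδ0))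
        have hwK : w ∉ K' := by
          intro hmem
          rcases hmem with rfl | hmem
          · exact hwz rfl
          · exact hUE hw hmem
        by_cases hApx : Apx Ω K' (fun v => (v - w)⁻¹)
        · exact Or.inl ⟨hwK, hApx⟩
        · exact Or.inr (Or.inl ⟨hwK, hApx⟩)
      obtain ⟨y, _, hyA, hyB⟩ := hUpc A (B ∪ Metric.ball z δ) hAopen
        (hBopen.union Metric.isOpen_ball) hsub ⟨b, hbU, hbA⟩
        ⟨z, hzU, Or.inr (Metric.mem_ball_self hδ0)⟩
      rcases hyB with hyB | hyb
      · exact hyB.2 hyA.2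
      · exact absurd (hc y hyA) (not_le.mpr (Metric.mem_ball.mp hyb))
    obtain ⟨a, haA, haz⟩ := hkey
    -- get an approximant with ε = 1 and derive a contradiction
    obtain ⟨h, hh, hha⟩ := haA.2 1 one_pos
    have haz0 : (0:ℝ) < ‖z - a‖ := by
      rw [norm_pos_iff, sub_ne_zero]
      intro hzea
      exact haA.1 (hzea ▸ hzK')
    have hazn : ‖z - a‖ < δ := by
      rw [← dist_eq_norm, dist_comm]
      exact haz
    -- lower bound at z
    have hlow : 1 + 3 / d < ‖h z‖ := by
      have h1 := hha z hzK'
      have h2 : ‖(z - a)⁻¹‖ - ‖h z‖ ≤ ‖h z - (z - a)⁻¹‖ := by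
        have := norm_sub_norm_le ((z - a)⁻¹) (h z)
        rw [norm_sub_rev] at this
        linarith
      have h3 : ‖(z - a)⁻¹‖ = ‖z - a‖⁻¹ := norm_inv _
      have h4 : δ⁻¹ < ‖z - a‖⁻¹ := by
        exact inv_strictAnti₀ haz0 hazn
      have h5 : δ⁻¹ = 2 + 3 / d := by
        rw [hδdef]
        field_simp
      rw [h3] at h2
      rw [h5] at h4
      linarith
    -- upper bound on E
    have hup : ∀ w ∈ E, ‖h w‖ ≤ 2 / d + 1 := by
      intro w hw
      have h1 := hha w (hEK' hw)
      have h2 : d ≤ ‖w - z‖ := by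
        rw [← norm_sub_rev, ← dist_eq_norm]
        exact infDist_le_dist_of_mem hw
      have h3 : d / 2 ≤ ‖w - a‖ := by
        have h4 : ‖w - z‖ - ‖z - a‖ ≤ ‖w - a‖ := by
          have := norm_sub_norm_le (w - z) (a - z)
          have he : (w - z) - (a - z) = w - a := by ring
          rw [he, norm_sub_rev a z] at this
          linarith
        linarith
      have h5 : ‖(w - a)⁻¹‖ ≤ 2 / d := by
        rw [norm_inv]
        have hwa0 : (0:ℝ) < d / 2 := by linarith
        calc ‖w - a‖⁻¹ ≤ (d / 2)⁻¹ := inv_anti₀ hwa0 h3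
          _ = 2 / d := by rw [inv_div]
      have h6 : ‖h w‖ - ‖(w - a)⁻¹‖ ≤ ‖h w - (w - a)⁻¹‖ := norm_sub_norm_le _ _
      linarith
    have hSup : sSup ((fun w => ‖h w‖) '' E) ≤ 2 / d + 1 := by
      apply Real.sSup_le
      · rintro x ⟨w, hw, rfl⟩
        exact hup w hw
      · positivity
    have hcontr := hz h hh
    have h23 : 2 / d < 3 / d := by
      rw [div_lt_div_iff₀ hd hd]
      nlinarith
    linarith
  · rintro (hzE | ⟨hzE, hUb, hUΩ⟩)
    · exact ⟨hEΩ hzE, fun h hh => le_csSup (hbdd h hh) ⟨z, hzE, rfl⟩⟩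
    · set U := connectedComponentIn Eᶜ z with hUdef
      have hzU : z ∈ U := mem_connectedComponentIn hzE
      have hUo : IsOpen U := hEc.isOpen_compl.connectedComponentIn
      have hfr : frontier U ⊆ E := by
        intro w hw
        rw [hUo.frontier_eq] at hw
        by_contra hwE
        have hwU : w ∉ U := hw.2
        set V := connectedComponentIn Eᶜ w with hVdef
        have hVo : IsOpen V := hEc.isOpen_compl.connectedComponentIn
        have hwV : w ∈ V := mem_connectedComponentIn hwE
        obtain ⟨y, hyV, hyU⟩ := mem_closure_iff.mp hw.1 V hVo hwV
        have hpc : IsPreconnected (U ∪ V) :=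
          IsPreconnected.union y hyU hyV isPreconnected_connectedComponentIn
            isPreconnected_connectedComponentIn
        have hsub : U ∪ V ⊆ U :=
          hpc.subset_connectedComponentIn (Or.inl hzU)
            (union_subset (connectedComponentIn_subset _ _) (connectedComponentIn_subset _ _))
        exact hwU (hsub (Or.inr hwV))
      refine ⟨hUΩ hzU, fun h hh => ?_⟩
      have hclΩ : closure U ⊆ Ω := by
        rw [closure_eq_self_union_frontier]
        exact union_subset hUΩ (hfr.trans hEΩ)
      exact Complex.norm_le_of_forall_mem_frontier_norm_le hUb
        ((hh.mono hclΩ).diffContOnCl)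
        (fun w hw => le_csSup (hbdd h hh) ⟨w, hfr hw, rfl⟩) (subset_closure hzU)
end

section
/- Let K be a compact subset of an open set Ω ⊆ ℂ that is holomorphically convex in Ω. Then ℂ \ K has only finitely many connected components. -/
open Metric Set Bornology

/-- The complement of a closed ball in `ℂ` is preconnected. -/
lemma isPreconnected_compl_closedBall_complex {R : ℝ} (hR : 0 ≤ R) :
    IsPreconnected ((Metric.closedBall (0 : ℂ) R)ᶜ) := by
  have h2 : (1 : Cardinal) < Module.rank ℝ ℂ := by rw [Complex.rank_real_complex]; norm_num
  have hs : IsConnected (Metric.sphere (0 : ℂ) 1 ×ˢ Set.Ioi R) :=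
    (isConnected_sphere h2 0 zero_le_one).prod isConnected_Ioi
  have himg : (fun p : ℂ × ℝ => p.2 • p.1) '' (Metric.sphere (0 : ℂ) 1 ×ˢ Set.Ioi R)
      = (Metric.closedBall (0 : ℂ) R)ᶜ := by
    ext z
    simp only [Set.mem_image, Set.mem_prod, mem_sphere_iff_norm, sub_zero, Set.mem_Ioi,
      Set.mem_compl_iff, Metric.mem_closedBall, dist_zero_right, not_le, Prod.exists]
    constructor
    · rintro ⟨v, t, ⟨hv, ht⟩, rfl⟩
      rw [norm_smul, hv, Real.norm_eq_abs, mul_one, abs_of_pos (lt_of_le_of_lt hR ht)]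
      exact ht
    · intro hz
      have hz0 : ‖z‖ ≠ 0 := (lt_of_le_of_lt hR hz).ne'
      refine ⟨‖z‖⁻¹ • z, ‖z‖, ⟨?_, hz⟩, ?_⟩
      · rw [norm_smul, Real.norm_eq_abs, abs_of_nonneg (by positivity), inv_mul_cancel₀ hz0]
      · rw [smul_smul, mul_inv_cancel₀ hz0, one_smul]
  rw [← himg]
  exact (hs.isPreconnected.image _ (continuous_snd.smul continuous_fst).continuousOn)

/-- If `K ⊆ Ω` is compact and holomorphically convex in `Ω`, then `ℂ \ K` has only
finitely many connected components. -/
theorem stmt10 (Ω : Set ℂ) (hΩ : IsOpen Ω) (K : Set ℂ) (hK : IsCompact K)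
    (hKΩ : K ⊆ Ω) (hconv : holHull Ω K = K) :
    {S : Set ℂ | ∃ z, z ∉ K ∧ S = connectedComponentIn Kᶜ z}.Finite := by
  obtain ⟨δ, δpos, hδ⟩ := hK.exists_thickening_subset_open hΩ hKΩ
  obtain ⟨R, hR0, hRK⟩ := hK.isBounded.subset_closedBall_lt 0 0
  set 𝒞 := {S : Set ℂ | ∃ z, z ∉ K ∧ S = connectedComponentIn Kᶜ z} with h𝒞
  -- balls of radius δ around points outside Ω avoid K
  have hballK : ∀ x : ℂ, x ∉ Ω → Metric.ball x δ ⊆ Kᶜ := by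
    intro x hx y hy hyK
    exact hx (hδ (Metric.mem_thickening_iff.mpr ⟨y, hyK, by
      rw [dist_comm]; exact hy⟩))
  -- frontier of a component is contained in K
  have hfr : ∀ z : ℂ, z ∉ K → frontier (connectedComponentIn Kᶜ z) ⊆ K := by
    intro z hz w hw
    by_contra hwK
    set S := connectedComponentIn Kᶜ z with hS
    have hSopen : IsOpen S := hK.isClosed.isOpen_compl.connectedComponentIn
    have hwS : w ∉ S := fun h => (hSopen.frontier_eq ▸ hw).2 h
    obtain ⟨r, rpos, hrK⟩ := Metric.isOpen_iff.mp hK.isClosed.isOpen_compl w hwK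
    have hwcl : w ∈ closure S := (hSopen.frontier_eq ▸ hw).1
    obtain ⟨p, hp⟩ := Metric.mem_closure_iff.mp hwcl r rpos
    have hpball : p ∈ Metric.ball w r := by rw [Metric.mem_ball, dist_comm]; exact hp.2
    have hball : Metric.ball w r ⊆ connectedComponentIn Kᶜ p :=
      (convex_ball w r).isPreconnected.subset_connectedComponentIn hpball hrK
    have : connectedComponentIn Kᶜ p = S := (connectedComponentIn_eq hp.1).symm
    exact hwS (this ▸ hball (Metric.mem_ball_self rpos))
  -- bounded components contain a point outside Ω
  have hout : ∀ S ∈ 𝒞, S ⊆ Metric.closedBall 0 R → ∃ x, x ∈ S ∧ x ∉ Ω := by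
    intro S hS hSball
    obtain ⟨z, hzK, rfl⟩ := hS
    by_contra hc
    push_neg at hc
    have hSΩ : connectedComponentIn Kᶜ z ⊆ Ω := hc
    set S := connectedComponentIn Kᶜ z with hSdef
    have hfrS : frontier S ⊆ K := hfr z hzK
    have hclS : closure S ⊆ Ω := by
      intro w hw
      by_cases hwS : w ∈ S
      · exact hSΩ hwS
      · refine hKΩ (hfrS ⟨hw, ?_⟩)
        rw [(hK.isClosed.isOpen_compl.connectedComponentIn
          (F := Kᶜ) (x := z)).interior_eq]
        exact hwS
    have hzS : z ∈ S := mem_connectedComponentIn hzK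
    have hzhull : z ∈ holHull Ω K := by
      refine ⟨hSΩ hzS, fun h hh => ?_⟩
      have hbdd : BddAbove ((fun w => ‖h w‖) '' K) :=
        hK.bddAbove_image ((hh.continuousOn.mono hKΩ).norm)
      refine Complex.norm_le_of_forall_mem_frontier_norm_le
        (Metric.isBounded_closedBall.subset hSball)
        ⟨hh.mono hSΩ, hh.continuousOn.mono hclS⟩ (fun w hw => ?_) (subset_closure hzS)
      exact le_csSup hbdd (Set.mem_image_of_mem _ (hfrS hw))
    rw [hconv] at hzhull
    exact hzK hzhull
  -- the unique unbounded component
  have hKball : K ⊆ Metric.closedBall 0 R := hRK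
  have hz₀K : ((R + 1 : ℝ) : ℂ) ∉ Metric.closedBall (0 : ℂ) R := by
    simp only [Metric.mem_closedBall, dist_zero_right, Complex.norm_real,
      Real.norm_eq_abs, not_le]
    rw [abs_of_pos (by linarith)]; linarith
  set z₀ : ℂ := ((R + 1 : ℝ) : ℂ) with hz₀def
  have hAK : (Metric.closedBall (0 : ℂ) R)ᶜ ⊆ Kᶜ := Set.compl_subset_compl.mpr hKball
  have hApre : IsPreconnected ((Metric.closedBall (0 : ℂ) R)ᶜ) :=
    isPreconnected_compl_closedBall_complex hR0.le
  set S₀ := connectedComponentIn Kᶜ z₀ with hS₀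
  have hsub : 𝒞 ⊆ insert S₀ {S ∈ 𝒞 | S ⊆ Metric.closedBall 0 R} := by
    intro S hS
    by_cases hball : S ⊆ Metric.closedBall 0 R
    · exact Set.mem_insert_of_mem _ ⟨hS, hball⟩
    · left
      obtain ⟨w, hwS, hwball⟩ := Set.not_subset.mp hball
      obtain ⟨z, hzK, rfl⟩ := hS
      have hSw : connectedComponentIn Kᶜ w = connectedComponentIn Kᶜ z :=
        (connectedComponentIn_eq hwS).symm
      have hA₁ : (Metric.closedBall (0 : ℂ) R)ᶜ ⊆ connectedComponentIn Kᶜ w :=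
        hApre.subset_connectedComponentIn hwball hAK
      have hz₀S : z₀ ∈ connectedComponentIn Kᶜ z := hSw ▸ hA₁ hz₀K
      exact connectedComponentIn_eq hz₀S
  refine Set.Finite.subset ?_ hsub
  refine Set.Finite.insert _ ?_
  -- finitely many bounded components, via a finite δ/2-net
  obtain ⟨t, htfin, htcov⟩ := totallyBounded_iff.mp
    (isCompact_closedBall (0 : ℂ) R).totallyBounded (δ / 2) (by linarith)
  have key : ∀ S ∈ {S ∈ 𝒞 | S ⊆ Metric.closedBall 0 R},
      ∃ y ∈ t, ∃ x, x ∈ S ∧ x ∉ Ω ∧ x ∈ Metric.ball y (δ / 2) := by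
    intro S hS
    obtain ⟨x, hxS, hxΩ⟩ := hout S hS.1 hS.2
    obtain ⟨y, hyt, hxy⟩ := Set.mem_iUnion₂.mp (htcov (hS.2 hxS))
    exact ⟨y, hyt, x, hxS, hxΩ, hxy⟩
  choose! y hyt x hxS hxΩ hxy using key
  refine Set.Finite.of_finite_image (htfin.subset (Set.image_subset_iff.mpr hyt)) ?_
  intro S₁ hS₁ S₂ hS₂ hy
  -- S₁ and S₂ contain δ/2-close points outside Ω, hence are equal components
  have hdist : dist (x S₂) (x S₁) < δ := by
    have h1 := hxy S₁ hS₁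
    have h2 := hxy S₂ hS₂
    rw [Metric.mem_ball] at h1 h2
    calc dist (x S₂) (x S₁) ≤ dist (x S₂) (y S₁) + dist (y S₁) (x S₁) := dist_triangle _ _ _
    _ < δ := by
      have h2' : dist (x S₂) (y S₁) < δ / 2 := by rw [hy]; exact h2
      have h1' : dist (y S₁) (x S₁) < δ / 2 := by rw [dist_comm]; exact h1
      linarith
  have hcomp : ∀ S ∈ {S ∈ 𝒞 | S ⊆ Metric.closedBall 0 R},
      connectedComponentIn Kᶜ (x S) = S := by
    intro S hS
    obtain ⟨z, hzK, hSz⟩ := hS.1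
    rw [hSz]
    exact (connectedComponentIn_eq (hSz ▸ hxS S hS)).symm
  have hball1 : Metric.ball (x S₁) δ ⊆ connectedComponentIn Kᶜ (x S₁) :=
    (convex_ball _ _).isPreconnected.subset_connectedComponentIn
      (Metric.mem_ball_self δpos) (hballK _ (hxΩ S₁ hS₁))
  have hx2 : x S₂ ∈ S₁ := hcomp S₁ hS₁ ▸ hball1 (Metric.mem_ball.mpr hdist)
  calc S₁ = connectedComponentIn Kᶜ (x S₁) := (hcomp S₁ hS₁).symm
  _ = connectedComponentIn Kᶜ (x S₂) := connectedComponentIn_eq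
      ((hcomp S₁ hS₁).symm ▸ hx2)
  _ = S₂ := hcomp S₂ hS₂
end

section
/- Every compact subset K of an open set Ω ⊆ ℂ that is holomorphically convex in Ω can be written as a countable union of polynomially convex compact sets. -/
open Set Metric Bornology Polynomial

/-- The polynomial hull of a set `K ⊆ ℂ`. -/
def polyHull (K : Set ℂ) : Set ℂ :=
  {z | ∀ P : Polynomial ℂ, ‖P.eval z‖ ≤ sSup ((fun w => ‖P.eval w‖) '' K)}

noncomputable section

namespace Stmt11Aux

/-- uniform approximability by polynomials on `K` -/
def Approx (K : Set ℂ) (f : ℂ → ℂ) : Prop :=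
  ∀ ε > 0, ∃ q : Polynomial ℂ, ∀ w ∈ K, ‖q.eval w - f w‖ ≤ ε

variable {K : Set ℂ}

lemma Approx.add {f g : ℂ → ℂ} (hf : Approx K f) (hg : Approx K g) :
    Approx K (fun w => f w + g w) := by
  intro ε hε
  obtain ⟨q1, h1⟩ := hf (ε/2) (by positivity)
  obtain ⟨q2, h2⟩ := hg (ε/2) (by positivity)
  refine ⟨q1 + q2, fun w hw => ?_⟩
  have e : (q1+q2).eval w - (f w + g w) = (q1.eval w - f w) + (q2.eval w - g w) := by
    simp; ring
  rw [e]
  calc ‖(q1.eval w - f w) + (q2.eval w - g w)‖ ≤ ‖q1.eval w - f w‖ + ‖q2.eval w - g w‖ :=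
        norm_add_le _ _
    _ ≤ ε/2 + ε/2 := add_le_add (h1 w hw) (h2 w hw)
    _ = ε := by ring

lemma Approx.const_mul {f : ℂ → ℂ} (c : ℂ) (hf : Approx K f) :
    Approx K (fun w => c * f w) := by
  intro ε hε
  have hc : (0:ℝ) < ‖c‖ + 1 := by positivity
  obtain ⟨q, hq⟩ := hf (ε/(‖c‖+1)) (by positivity)
  refine ⟨Polynomial.C c * q, fun w hw => ?_⟩
  have e : (Polynomial.C c * q).eval w - c * f w = c * (q.eval w - f w) := by
    simp; ring
  rw [e, norm_mul]
  calc ‖c‖ * ‖q.eval w - f w‖ ≤ ‖c‖ * (ε/(‖c‖+1)) := by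
        apply mul_le_mul_of_nonneg_left (hq w hw) (norm_nonneg _)
    _ ≤ (‖c‖+1) * (ε/(‖c‖+1)) := by
        apply mul_le_mul_of_nonneg_right (by linarith) (by positivity)
    _ = ε := by field_simp

lemma Approx.mul {f g : ℂ → ℂ} (Cf Cg : ℝ) (hCf : ∀ w ∈ K, ‖f w‖ ≤ Cf)
    (hCg : ∀ w ∈ K, ‖g w‖ ≤ Cg) (hf : Approx K f) (hg : Approx K g) :
    Approx K (fun w => f w * g w) := by
  intro ε hε
  set D : ℝ := max Cf 0 + max Cg 0 + 1 with hD
  have hD0 : 0 < D := by positivity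
  set δ : ℝ := min 1 (ε / D) with hδdef
  have hδ0 : 0 < δ := lt_min one_pos (by positivity)
  obtain ⟨q1, h1⟩ := hf δ hδ0
  obtain ⟨q2, h2⟩ := hg δ hδ0
  refine ⟨q1 * q2, fun w hw => ?_⟩
  have e : (q1*q2).eval w - f w * g w
      = (q1.eval w - f w) * q2.eval w + f w * (q2.eval w - g w) := by
    simp; ring
  have hq2 : ‖q2.eval w‖ ≤ max Cg 0 + 1 := by
    have := h2 w hw
    have : ‖q2.eval w‖ ≤ ‖g w‖ + δ := by
      calc ‖q2.eval w‖ = ‖g w + (q2.eval w - g w)‖ := by ring_nf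
        _ ≤ ‖g w‖ + ‖q2.eval w - g w‖ := norm_add_le _ _
        _ ≤ ‖g w‖ + δ := by linarith [h2 w hw]
    have hg' : ‖g w‖ ≤ max Cg 0 := le_max_of_le_left (hCg w hw)
    have hδ1 : δ ≤ 1 := min_le_left _ _
    linarith
  have hfw : ‖f w‖ ≤ max Cf 0 := le_max_of_le_left (hCf w hw)
  rw [e]
  calc ‖(q1.eval w - f w) * q2.eval w + f w * (q2.eval w - g w)‖
      ≤ ‖q1.eval w - f w‖ * ‖q2.eval w‖ + ‖f w‖ * ‖q2.eval w - g w‖ := by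
        refine (norm_add_le _ _).trans ?_
        rw [norm_mul, norm_mul]
    _ ≤ δ * (max Cg 0 + 1) + max Cf 0 * δ := by
        have := h1 w hw
        have := h2 w hw
        have h0 : (0:ℝ) ≤ ‖q2.eval w‖ := norm_nonneg _
        nlinarith [norm_nonneg (q1.eval w - f w), norm_nonneg (f w),
          norm_nonneg (q2.eval w - g w)]
    _ = δ * D := by ring
    _ ≤ (ε / D) * D := by
        apply mul_le_mul_of_nonneg_right (min_le_right _ _) hD0.le
    _ = ε := by field_simp

lemma Approx.sum {F : ℕ → ℂ → ℂ} (N : ℕ) (h : ∀ i < N, Approx K (F i)) :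
    Approx K (fun w => ∑ i ∈ Finset.range N, F i w) := by
  induction N with
  | zero =>
    intro ε hε
    exact ⟨0, fun w hw => by simpa using hε.le⟩
  | succ n ih =>
    have h1 : Approx K (fun w => ∑ i ∈ Finset.range n, F i w) :=
      ih fun i hi => h i (hi.trans (Nat.lt_succ_self n))
    have h2 := (h1.add (h n (Nat.lt_succ_self n)))
    intro ε hε
    obtain ⟨q, hq⟩ := h2 ε hε
    refine ⟨q, fun w hw => ?_⟩
    simpa [Finset.sum_range_succ] using hq w hw

lemma inv_norm_le {a w : ℂ} {d : ℝ} (hd : 0 < d) (h : d ≤ dist a w) :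
    ‖(w - a)⁻¹‖ ≤ 1/d := by
  rw [norm_inv]
  rw [one_div]
  apply inv_anti₀ hd
  rw [dist_comm, dist_eq_norm] at h
  exact h

lemma Approx.pow_inv {a : ℂ} {d : ℝ} (hd : 0 < d) (hdist : ∀ w ∈ K, d ≤ dist a w)
    (h : Approx K (fun w => (w - a)⁻¹)) (m : ℕ) :
    Approx K (fun w => ((w - a)⁻¹) ^ (m+1)) := by
  induction m with
  | zero => simpa using h
  | succ n ih =>
    have hb1 : ∀ w ∈ K, ‖((w - a)⁻¹) ^ (n+1)‖ ≤ (1/d)^(n+1) := fun w hw => by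
      rw [norm_pow]
      exact pow_le_pow_left₀ (norm_nonneg _) (inv_norm_le hd (hdist w hw)) _
    have hb2 : ∀ w ∈ K, ‖(w - a)⁻¹‖ ≤ 1/d := fun w hw => inv_norm_le hd (hdist w hw)
    have := (ih.mul ((1/d)^(n+1)) (1/d) hb1 hb2 h : Approx K _)
    intro ε hε
    obtain ⟨q, hq⟩ := this ε hε
    refine ⟨q, fun w hw => ?_⟩
    have := hq w hw
    simpa [pow_succ] using this

lemma geom_identity (a b w : ℂ) (ha : w ≠ a) (hb : w ≠ b) (N : ℕ) :
    (w - b)⁻¹ - ∑ k ∈ Finset.range N, (b-a)^k * ((w-a)⁻¹)^(k+1)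
      = (b-a)^N * ((w-a)⁻¹)^N * (w-b)⁻¹ := by
  have h1 : w - a ≠ 0 := sub_ne_zero.mpr ha
  have h2 : w - b ≠ 0 := sub_ne_zero.mpr hb
  induction N with
  | zero => simp
  | succ n ih =>
    rw [Finset.sum_range_succ, show (w - b)⁻¹ - (∑ k ∈ Finset.range n,
      (b-a)^k * ((w-a)⁻¹)^(k+1) + (b-a)^n * ((w-a)⁻¹)^(n+1))
      = ((w - b)⁻¹ - ∑ k ∈ Finset.range n, (b-a)^k * ((w-a)⁻¹)^(k+1))
        - (b-a)^n * ((w-a)⁻¹)^(n+1) by ring, ih]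
    have key : (w-b)⁻¹ - (w-a)⁻¹ = (b-a)*(w-a)⁻¹*(w-b)⁻¹ := by
      rw [inv_sub_inv h2 h1, div_eq_mul_inv, mul_inv]; ring
    linear_combination (b-a)^n * ((w-a)⁻¹)^n * key

lemma geom_identity2 (a w : ℂ) (ha : w ≠ a) (h0 : a ≠ 0) (N : ℕ) :
    (w - a)⁻¹ + ∑ k ∈ Finset.range N, w^k * (a^(k+1))⁻¹
      = w^N * (a^N)⁻¹ * (w-a)⁻¹ := by
  have h1 : w - a ≠ 0 := sub_ne_zero.mpr ha
  induction N with
  | zero => simp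
  | succ n ih =>
    rw [Finset.sum_range_succ, show (w - a)⁻¹ + (∑ k ∈ Finset.range n, w^k * (a^(k+1))⁻¹
      + w^n * (a^(n+1))⁻¹) = ((w - a)⁻¹ + ∑ k ∈ Finset.range n, w^k * (a^(k+1))⁻¹)
      + w^n * (a^(n+1))⁻¹ by ring, ih]
    field_simp
    ring

lemma approx_inv_of_near {a b : ℂ} {d : ℝ} (hd : 0 < d)
    (hdist : ∀ w ∈ K, d ≤ dist a w)
    (ha : Approx K (fun w => (w - a)⁻¹)) (hb : dist b a < d) :
    Approx K (fun w => (w - b)⁻¹) := by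
  intro ε hε
  set r : ℝ := dist b a / d with hrdef
  have hr1 : r < 1 := (div_lt_one hd).mpr hb
  have hr0 : 0 ≤ r := div_nonneg dist_nonneg hd.le
  have hdb : 0 < d - dist b a := by linarith
  obtain ⟨N, hN⟩ := exists_pow_lt_of_lt_one (show (0:ℝ) < ε/2 * (d - dist b a) by positivity) hr1
  have hsum : Approx K (fun w => ∑ k ∈ Finset.range N, (b-a)^k * ((w-a)⁻¹)^(k+1)) := by
    apply Approx.sum
    intro i hi
    exact Approx.const_mul _ (Approx.pow_inv hd hdist ha i)
  obtain ⟨q, hq⟩ := hsum (ε/2) (by positivity)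
  refine ⟨q, fun w hw => ?_⟩
  have hwa : w ≠ a := by
    intro h; subst h
    have := hdist w hw; simp at this; linarith
  have hwb : w ≠ b := by
    intro h; subst h
    have h1 := hdist w hw
    rw [dist_comm] at h1
    linarith
  have key := geom_identity a b w hwa hwb N
  have h2 : d - dist b a ≤ dist b w := by
    have h3 := hdist w hw
    have h4 : dist a w ≤ dist a b + dist b w := dist_triangle a b w
    rw [dist_comm a b] at h4
    linarith
  have htail : ‖(b-a)^N * ((w-a)⁻¹)^N * (w-b)⁻¹‖ ≤ r^N / (d - dist b a) := by
    rw [norm_mul, norm_mul, norm_pow, norm_pow]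
    have e1 : ‖b - a‖ = dist b a := by rw [dist_eq_norm]
    have e2 : ‖(w - a)⁻¹‖ ≤ 1/d := inv_norm_le hd (hdist w hw)
    have e3 : ‖(w - b)⁻¹‖ ≤ 1/(d - dist b a) := inv_norm_le hdb h2
    calc ‖b-a‖^N * ‖(w-a)⁻¹‖^N * ‖(w-b)⁻¹‖
        ≤ (dist b a)^N * (1/d)^N * (1/(d - dist b a)) := by
          apply mul_le_mul (mul_le_mul (by rw [e1]) (pow_le_pow_left₀ (norm_nonneg _) e2 N)
            (by positivity) (by positivity)) e3 (norm_nonneg _) (by positivity)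
      _ = r^N / (d - dist b a) := by
          rw [hrdef, div_pow]
          field_simp
          rw [one_pow, mul_one, div_pow, mul_div_assoc', mul_div_right_comm,
            div_self (pow_ne_zero N hd.ne'), one_mul]
  have htail2 : ‖(b-a)^N * ((w-a)⁻¹)^N * (w-b)⁻¹‖ ≤ ε/2 := by
    refine htail.trans ?_
    rw [div_le_iff₀ hdb]
    exact hN.le
  calc ‖q.eval w - (w - b)⁻¹‖
      = ‖(q.eval w - ∑ k ∈ Finset.range N, (b-a)^k * ((w-a)⁻¹)^(k+1))
          - ((w - b)⁻¹ - ∑ k ∈ Finset.range N, (b-a)^k * ((w-a)⁻¹)^(k+1))‖ := by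
        congr 1; ring
    _ ≤ ‖q.eval w - ∑ k ∈ Finset.range N, (b-a)^k * ((w-a)⁻¹)^(k+1)‖
          + ‖(w - b)⁻¹ - ∑ k ∈ Finset.range N, (b-a)^k * ((w-a)⁻¹)^(k+1)‖ := norm_sub_le _ _
    _ ≤ ε/2 + ε/2 := by
        refine add_le_add (hq w hw) ?_
        rw [key] at *
        exact htail2
    _ = ε := by ring


lemma rank_gt : (1 : Cardinal) < Module.rank ℝ ℂ := by
  rw [Complex.rank_real_complex]
  norm_num

lemma isPreconnected_norm_gt {r : ℝ} (hr : 0 ≤ r) :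
    IsPreconnected {w : ℂ | r < ‖w‖} := by
  set T := Metric.sphere (0:ℂ) (r+1) with hT
  have hTc : IsPreconnected T := (isConnected_sphere rank_gt 0 (by linarith)).isPreconnected
  have key : {w : ℂ | r < ‖w‖} =
      ⋃₀ { S | ∃ u : ℂ, ‖u‖ = 1 ∧ S = ((fun t : ℝ => t • u) '' (Ioi r)) ∪ T } := by
    ext w
    constructor
    · intro hw
      have hw0 : w ≠ 0 := by
        intro h
        rw [h] at hw
        simp at hw
        linarith
      refine ⟨((fun t : ℝ => t • (‖w‖⁻¹ • w)) '' (Ioi r)) ∪ T,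
        ⟨‖w‖⁻¹ • w,
          by rw [norm_smul, norm_inv, norm_norm, inv_mul_cancel₀ (norm_ne_zero_iff.mpr hw0)],
          rfl⟩, Or.inl ⟨‖w‖, hw, ?_⟩⟩
      simp only [smul_smul]
      rw [mul_inv_cancel₀ (norm_ne_zero_iff.mpr hw0), one_smul]
    · rintro ⟨S, ⟨u, hu, rfl⟩, hx⟩
      rcases hx with ⟨t, ht, rfl⟩ | hx
      · simp only [mem_setOf_eq, norm_smul, hu, mul_one, Real.norm_eq_abs]
        rw [abs_of_pos (lt_of_le_of_lt hr ht)]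
        exact ht
      · simp only [mem_setOf_eq]
        have : ‖w‖ = r + 1 := by simpa [hT] using hx
        rw [this]; linarith
  rw [key]
  apply isPreconnected_sUnion (((r+1:ℝ) : ℂ))
  · rintro S ⟨u, hu, rfl⟩
    refine Or.inr ?_
    show _ ∈ Metric.sphere (0:ℂ) (r+1)
    rw [mem_sphere_iff_norm, sub_zero, Complex.norm_real, Real.norm_eq_abs,
      abs_of_pos (show (0:ℝ) < r+1 by linarith)]
  · rintro S ⟨u, hu, rfl⟩
    apply IsPreconnected.union ((r+1) • u)
    · exact ⟨r+1, Set.mem_Ioi.mpr (by linarith), rfl⟩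
    · show _ ∈ Metric.sphere (0:ℂ) (r+1)
      rw [mem_sphere_iff_norm, sub_zero, norm_smul, hu, mul_one, Real.norm_eq_abs,
        abs_of_pos (show (0:ℝ) < r+1 by linarith)]
    · exact isPreconnected_Ioi.image _ (Continuous.continuousOn (by continuity))
    · exact hTc

/-- the frontier of a connected component of the complement of `K` is contained in `K`. -/
lemma frontier_component_subset {K : Set ℂ} (hKc : IsClosed K) (x : ℂ) :
    frontier (connectedComponentIn Kᶜ x) ⊆ K := by
  intro y hy
  by_contra hyK
  have hopen : IsOpen (Kᶜ) := hKc.isOpen_compl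
  have hyC : y ∈ connectedComponentIn Kᶜ y := mem_connectedComponentIn hyK
  have hyO : IsOpen (connectedComponentIn Kᶜ y) := hopen.connectedComponentIn
  have hcl : y ∈ closure (connectedComponentIn Kᶜ x) := hy.1
  obtain ⟨z, hz1, hz2⟩ := mem_closure_iff.mp hcl _ hyO hyC
  have hcomp : connectedComponentIn Kᶜ x = connectedComponentIn Kᶜ y := by
    rw [connectedComponentIn_eq hz2, connectedComponentIn_eq hz1]
  have : y ∈ connectedComponentIn Kᶜ x := hcomp ▸ hyC
  have hint : y ∈ interior (connectedComponentIn Kᶜ x) := by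
    rw [(hopen.connectedComponentIn : IsOpen (connectedComponentIn Kᶜ x)).interior_eq]
    exact this
  exact hy.2 hint



lemma exists_notin_Omega {Ω K : Set ℂ} (hΩ : IsOpen Ω) (hK : IsCompact K) (hKΩ : K ⊆ Ω)
    (hconv : holHull Ω K = K) {x : ℂ} (hx : x ∉ K)
    (hb : IsBounded (connectedComponentIn Kᶜ x)) :
    ∃ p ∈ connectedComponentIn Kᶜ x, p ∉ Ω := by
  by_contra hcon
  push_neg at hcon
  set C := connectedComponentIn Kᶜ x with hC
  have hsub : C ⊆ Ω := hcon
  have hclsub : closure C ⊆ Ω := by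
    rw [closure_eq_self_union_frontier]
    exact union_subset hsub ((frontier_component_subset hK.isClosed x).trans hKΩ)
  have hCholl : C ⊆ holHull Ω K := by
    intro y hy
    refine ⟨hsub hy, fun h hdiff => ?_⟩
    have hbdd : BddAbove ((fun w => ‖h w‖) '' K) :=
      (hK.image_of_continuousOn ((hdiff.continuousOn.mono hKΩ).norm)).bddAbove
    apply Complex.norm_le_of_forall_mem_frontier_norm_le hb
      ((hdiff.mono hclsub).diffContOnCl)
    · intro w hw
      exact le_csSup hbdd (mem_image_of_mem _ (frontier_component_subset hK.isClosed x hw))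
    · exact subset_closure hy
  rw [hconv] at hCholl
  exact hx (hCholl (mem_connectedComponentIn hx))


variable {K : Set ℂ}


lemma subset_polyHull (hK : IsCompact K) : K ⊆ polyHull K := by
  intro z hz P
  apply le_csSup
  · exact ((hK.image ((Polynomial.continuous P).norm)).bddAbove)
  · exact mem_image_of_mem _ hz

lemma polyHull_empty : polyHull (∅ : Set ℂ) = ∅ := by
  ext z
  simp only [polyHull, mem_setOf_eq, mem_empty_iff_false, iff_false]
  intro h
  have := h 1
  simp [Real.sSup_empty] at this
  linarith

lemma polyHull_eq_self (hK : IsCompact K) (hc : IsPreconnected Kᶜ) : polyHull K = K := by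
  rcases K.eq_empty_or_nonempty with rfl | hne
  · exact polyHull_empty
  refine Subset.antisymm ?_ (subset_polyHull hK)
  intro z hz
  by_contra hzK
  obtain ⟨R, hR⟩ := (isBounded_iff_forall_norm_le.mp hK.isBounded)
  have hR0 : 0 ≤ R := le_trans (norm_nonneg _) (hR _ hne.choose_spec)
  have hdpos : ∀ a ∉ K, 0 < infDist a K := fun a ha =>
    (hK.isClosed.notMem_iff_infDist_pos hne).mp ha
  have hdle : ∀ (a : ℂ), ∀ w ∈ K, infDist a K ≤ dist a w := fun a w hw =>
    infDist_le_dist_of_mem hw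
  set U : Set ℂ := {a | a ∉ K ∧ Approx K (fun w => (w - a)⁻¹)} with hU
  set V : Set ℂ := {a | a ∉ K ∧ ¬ Approx K (fun w => (w - a)⁻¹)} with hV
  have hUopen : IsOpen U := by
    rw [Metric.isOpen_iff]
    rintro a ⟨haK, hga⟩
    refine ⟨infDist a K, hdpos a haK, fun b hb => ?_⟩
    rw [mem_ball] at hb
    have hbK : b ∉ K := by
      intro hbK
      have h1 := hdle a b hbK
      rw [dist_comm] at hb
      linarith
    exact ⟨hbK, approx_inv_of_near (hdpos a haK) (hdle a) hga hb⟩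
  have hVopen : IsOpen V := by
    rw [Metric.isOpen_iff]
    rintro a ⟨haK, hga⟩
    refine ⟨infDist a K / 2, half_pos (hdpos a haK), fun b hb => ?_⟩
    rw [mem_ball] at hb
    have hbK : b ∉ K := by
      intro hbK
      have h1 := hdle a b hbK
      rw [dist_comm] at hb
      have := hdpos a haK
      linarith
    refine ⟨hbK, fun hgb => hga ?_⟩
    refine approx_inv_of_near (d := infDist a K / 2) (half_pos (hdpos a haK)) ?_ hgb ?_
    · intro w hw
      have h1 := hdle a w hw
      have h2 : dist a w ≤ dist a b + dist b w := dist_triangle a b w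
      rw [dist_comm a b] at h2
      linarith
    · rw [dist_comm]
      linarith
  -- the big point is good
  set a₀ : ℂ := ((2*R+2 : ℝ) : ℂ) with ha₀
  have ha₀norm : ‖a₀‖ = 2*R+2 := by
    rw [ha₀, Complex.norm_real, Real.norm_eq_abs, abs_of_pos (by linarith)]
  have ha₀K : a₀ ∉ K := by
    intro h
    have := hR _ h
    rw [ha₀norm] at this
    linarith
  have hbig : Approx K (fun w => (w - a₀)⁻¹) := by
    intro ε hε
    obtain ⟨N, hN⟩ := exists_pow_lt_of_lt_one hε (show (1:ℝ)/2 < 1 by norm_num)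
    refine ⟨-∑ k ∈ Finset.range N, Polynomial.C ((a₀^(k+1))⁻¹) * Polynomial.X^k,
      fun w hw => ?_⟩
    have hwa : w ≠ a₀ := fun h => ha₀K (h ▸ hw)
    have h00 : a₀ ≠ 0 := by
      intro h
      rw [h] at ha₀norm
      simp at ha₀norm
      linarith
    have hev : (-∑ k ∈ Finset.range N, Polynomial.C ((a₀^(k+1))⁻¹) * Polynomial.X^k).eval w
        = -∑ k ∈ Finset.range N, w^k * (a₀^(k+1))⁻¹ := by
      simp [Polynomial.eval_finset_sum]
      exact Finset.sum_congr rfl fun k _ => by ring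
    rw [hev]
    have key := geom_identity2 a₀ w hwa h00 N
    have e : -∑ k ∈ Finset.range N, w^k * (a₀^(k+1))⁻¹ - (w - a₀)⁻¹
        = -(w^N * (a₀^N)⁻¹ * (w-a₀)⁻¹) := by
      rw [← key]; ring
    rw [e, norm_neg]
    have hdista : R + 2 ≤ dist a₀ w := by
      rw [dist_eq_norm]
      have h1 := norm_sub_norm_le a₀ w
      have h2 := hR w hw
      rw [ha₀norm] at h1
      linarith
    have hb1 : ‖(w - a₀)⁻¹‖ ≤ 1/(R+2) := inv_norm_le (by linarith) hdista
    have hb2 : ‖w^N * (a₀^N)⁻¹‖ ≤ (1/2:ℝ)^N := by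
      rw [norm_mul, norm_pow, norm_inv, norm_pow, ha₀norm, ← div_eq_mul_inv, ← div_pow]
      apply pow_le_pow_left₀ (by positivity)
      rw [div_le_div_iff₀ (by linarith) (by norm_num)]
      linarith [hR w hw]
    calc ‖w^N * (a₀^N)⁻¹ * (w-a₀)⁻¹‖ = ‖w^N * (a₀^N)⁻¹‖ * ‖(w-a₀)⁻¹‖ := norm_mul _ _
      _ ≤ (1/2:ℝ)^N * (1/(R+2)) := by
          apply mul_le_mul hb2 hb1 (norm_nonneg _) (by positivity)
      _ ≤ (1/2:ℝ)^N * 1 := by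
          apply mul_le_mul_of_nonneg_left ?_ (by positivity)
          rw [div_le_one (by linarith)]
          linarith
      _ ≤ ε := by rw [mul_one]; exact hN.le
  -- z is good by connectedness
  have hgz : Approx K (fun w => (w - z)⁻¹) := by
    by_contra hng
    have cover : Kᶜ ⊆ U ∪ V := by
      intro a ha
      by_cases h : Approx K (fun w => (w - a)⁻¹)
      · exact Or.inl ⟨ha, h⟩
      · exact Or.inr ⟨ha, h⟩
    obtain ⟨x, -, hxU, hxV⟩ := hc U V hUopen hVopen cover
      ⟨a₀, ha₀K, ha₀K, hbig⟩ ⟨z, hzK, hzK, hng⟩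
    exact hxV.2 hxU.2
  -- separation polynomial
  set s : ℝ := R + ‖z‖ with hs
  have hs0 : 0 ≤ s := by positivity
  set ε : ℝ := (2*(s+1))⁻¹ with hε
  obtain ⟨q, hq⟩ := hgz ε (by positivity)
  set Q : Polynomial ℂ := 1 - (Polynomial.X - Polynomial.C z) * q with hQ
  have hQz : Q.eval z = 1 := by simp [hQ]
  have hQw : ∀ w ∈ K, ‖Q.eval w‖ ≤ 1/2 := by
    intro w hw
    have hwz : w - z ≠ 0 := sub_ne_zero.mpr (fun h => hzK (h ▸ hw))
    have e : Q.eval w = (w - z) * ((w-z)⁻¹ - q.eval w) := by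
      simp [hQ]
      field_simp
    rw [e, norm_mul]
    have h1 : ‖w - z‖ ≤ s := (norm_sub_le _ _).trans (by
      rw [hs]; linarith [hR w hw])
    have h2 : ‖(w-z)⁻¹ - q.eval w‖ ≤ ε := by rw [norm_sub_rev]; exact hq w hw
    calc ‖w - z‖ * ‖(w-z)⁻¹ - q.eval w‖ ≤ s * ε := by
          apply mul_le_mul h1 h2 (norm_nonneg _) hs0
      _ ≤ 1/2 := by
          rw [hε, ← div_eq_mul_inv, div_le_iff₀ (by positivity)]
          linarith
  have hle := hz Q
  have hsup : sSup ((fun w => ‖Q.eval w‖) '' K) ≤ 1/2 :=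
    csSup_le (hne.image _) (by rintro _ ⟨w, hw, rfl⟩; exact hQw w hw)
  rw [hQz, norm_one] at hle
  linarith


end Stmt11Aux

open Stmt11Aux

/-- Every compact `K ⊆ Ω` that is holomorphically convex in `Ω` is a countable union
of polynomially convex compact sets. -/

theorem stmt11 (Ω : Set ℂ) (hΩ : IsOpen Ω) (K : Set ℂ) (hK : IsCompact K)
    (hKΩ : K ⊆ Ω) (hconv : holHull Ω K = K) :
    ∃ F : ℕ → Set ℂ, (∀ n, IsCompact (F n) ∧ polyHull (F n) = F n) ∧ K = ⋃ n, F n := by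
  classical
  rcases K.eq_empty_or_nonempty with rfl | hne
  · exact ⟨fun _ => ∅, fun n => ⟨isCompact_empty, polyHull_empty⟩, by simp⟩
  obtain ⟨R₀, hR₀⟩ := isBounded_iff_forall_norm_le.mp hK.isBounded
  have hR₀0 : 0 ≤ R₀ := le_trans (norm_nonneg _) (hR₀ _ hne.choose_spec)
  set ρ : ℝ := R₀ + 1 with hρ
  -- bad points: points of bounded complementary components
  set Bad : ℂ → Prop := fun x => x ∉ K ∧ IsBounded (connectedComponentIn Kᶜ x) with hBad
  have hchoice : ∀ x : ℂ, ∃ q : ℂ, Bad x → q ∈ connectedComponentIn Kᶜ x ∧ q ∉ Ω := by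
    intro x
    by_cases h : Bad x
    · obtain ⟨q, hq1, hq2⟩ := exists_notin_Omega hΩ hK hKΩ hconv h.1 h.2
      exact ⟨q, fun _ => ⟨hq1, hq2⟩⟩
    · exact ⟨0, fun h' => absurd h' h⟩
  choose p hp using hchoice
  -- unbounded components contain the outside region
  have houtside : ∀ x : ℂ, x ∉ K → ¬ IsBounded (connectedComponentIn Kᶜ x) →
      {w : ℂ | R₀ < ‖w‖} ⊆ connectedComponentIn Kᶜ x := by
    intro x hxK hxb
    have : ∃ y ∈ connectedComponentIn Kᶜ x, R₀ < ‖y‖ := by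
      by_contra hcon
      push_neg at hcon
      exact hxb (isBounded_iff_forall_norm_le.mpr ⟨R₀, hcon⟩)
    obtain ⟨y, hy, hyR⟩ := this
    have hOsub : {w : ℂ | R₀ < ‖w‖} ⊆ Kᶜ := by
      intro w hw hwK
      exact absurd (hR₀ w hwK) (not_le.mpr hw)
    have h1 : {w : ℂ | R₀ < ‖w‖} ⊆ connectedComponentIn Kᶜ y :=
      (isPreconnected_norm_gt hR₀0).subset_connectedComponentIn hyR hOsub
    rwa [← connectedComponentIn_eq hy] at h1
  -- members of bounded components have norm at most R₀
  have hcompnorm : ∀ x : ℂ, Bad x → ∀ y ∈ connectedComponentIn Kᶜ x, ‖y‖ ≤ R₀ := by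
    intro x hx y hy
    by_contra h
    push_neg at h
    have h1 : {w : ℂ | R₀ < ‖w‖} ⊆ connectedComponentIn Kᶜ y :=
      (isPreconnected_norm_gt hR₀0).subset_connectedComponentIn h
        (fun w hw hwK => absurd (hR₀ w hwK) (not_le.mpr hw))
    rw [← connectedComponentIn_eq hy] at h1
    have hb : IsBounded {w : ℂ | R₀ < ‖w‖} := hx.2.subset h1
    obtain ⟨R, hR⟩ := isBounded_iff_forall_norm_le.mp hb
    have hpos : (0:ℝ) < max R R₀ + 1 := by
      have := le_max_right R R₀; linarith
    have hmem : ((max R R₀ + 1 : ℝ) : ℂ) ∈ {w : ℂ | R₀ < ‖w‖} := by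
      simp only [mem_setOf_eq, Complex.norm_real, Real.norm_eq_abs, abs_of_pos hpos]
      have := le_max_right R R₀; linarith
    have h2 := hR _ hmem
    rw [Complex.norm_real, Real.norm_eq_abs, abs_of_pos hpos] at h2
    have := le_max_left R R₀; linarith
  -- rays
  set toC : ℚ × ℚ → ℂ := fun c => (c.1 : ℂ) + (c.2 : ℂ) * Complex.I with htoC
  set v : ℚ × ℚ → ℂ → ℂ := fun c x => if p x = toC c then 1 else p x - toC c with hv
  have hvne : ∀ c x, v c x ≠ 0 := by
    intro c x
    by_cases h : p x = toC c
    · simp [hv, h]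
    · simp only [hv, if_neg h]
      exact sub_ne_zero.mpr h
  set ray : ℚ × ℚ → ℂ → ℝ → ℂ := fun c x t => p x + (t:ℂ) * v c x with hray
  set G : ℚ × ℚ → ℕ → Set ℂ := fun c n =>
    K ∩ {w | ∀ x, Bad x → ∀ t : ℝ, 0 ≤ t → 1/(n+1 : ℝ) ≤ dist w (ray c x t)} with hG
  have hGK : ∀ c n, G c n ⊆ K := fun c n => inter_subset_left
  have hGcomp : ∀ c n, IsCompact (G c n) := by
    intro c n
    apply hK.inter_right
    have he : {w : ℂ | ∀ x, Bad x → ∀ t : ℝ, 0 ≤ t → 1/(n+1 : ℝ) ≤ dist w (ray c x t)} =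
        ⋂ x, ⋂ (_ : Bad x), ⋂ t : ℝ, ⋂ (_ : 0 ≤ t), {w | 1/(n+1:ℝ) ≤ dist w (ray c x t)} := by
      ext w
      simp only [mem_setOf_eq, mem_iInter]
    rw [he]
    exact isClosed_iInter fun x => isClosed_iInter fun _ => isClosed_iInter fun t =>
      isClosed_iInter fun _ =>
        isClosed_le continuous_const (continuous_id.dist continuous_const)
  -- the complement of each G c n is preconnected
  have hGpoly : ∀ c n, IsPreconnected ((G c n)ᶜ) := by
    intro c n
    set ε : ℝ := 1/(n+1:ℝ) with hε
    have hε0 : 0 < ε := by positivity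
    set N : ℂ → Set ℂ := fun x => {w | ∃ t : ℝ, 0 ≤ t ∧ dist w (ray c x t) < ε} with hN
    have hNconv : ∀ x, Convex ℝ (N x) := by
      intro x w₁ h₁ w₂ h₂ a b ha hb hab
      obtain ⟨t₁, ht₁, hd₁⟩ := h₁
      obtain ⟨t₂, ht₂, hd₂⟩ := h₂
      refine ⟨a*t₁ + b*t₂, by positivity, ?_⟩
      have hab' : (a:ℂ) + (b:ℂ) = 1 := by
        rw [← Complex.ofReal_add, hab, Complex.ofReal_one]
      have hrayaff : ray c x (a*t₁+b*t₂) = a • ray c x t₁ + b • ray c x t₂ := by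
        simp only [hray, Complex.real_smul]
        push_cast
        linear_combination (-(p x)) * hab'
      rw [hrayaff]
      have hdd : dist (a • w₁ + b • w₂) (a • ray c x t₁ + b • ray c x t₂)
          ≤ a * dist w₁ (ray c x t₁) + b * dist w₂ (ray c x t₂) := by
        rw [dist_eq_norm, dist_eq_norm, dist_eq_norm]
        have e : a • w₁ + b • w₂ - (a • ray c x t₁ + b • ray c x t₂)
            = a • (w₁ - ray c x t₁) + b • (w₂ - ray c x t₂) := by
          simp only [smul_sub]
          abel
        rw [e]
        calc ‖a • (w₁ - ray c x t₁) + b • (w₂ - ray c x t₂)‖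
            ≤ ‖a • (w₁ - ray c x t₁)‖ + ‖b • (w₂ - ray c x t₂)‖ := norm_add_le _ _
          _ = a * ‖w₁ - ray c x t₁‖ + b * ‖w₂ - ray c x t₂‖ := by
              rw [norm_smul, norm_smul, Real.norm_eq_abs, Real.norm_eq_abs,
                abs_of_nonneg ha, abs_of_nonneg hb]
      have : a * dist w₁ (ray c x t₁) + b * dist w₂ (ray c x t₂) < ε := by
        rcases eq_or_lt_of_le ha with rfl | ha'
        · have hb1 : b = 1 := by linarith
          rw [hb1]
          simpa using hd₂
        · nlinarith [mul_lt_mul_of_pos_left hd₁ ha', mul_le_mul_of_nonneg_left hd₂.le hb]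
      exact lt_of_le_of_lt hdd this
    have hNsub : ∀ x, Bad x → N x ⊆ (G c n)ᶜ := by
      intro x hx w hw hwG
      obtain ⟨t, ht, hd⟩ := hw
      exact absurd (hwG.2 x hx t ht) (not_le.mpr hd)
    have hray0 : ∀ x, ray c x 0 = p x := fun x => by simp [hray]
    have hpx_in_N : ∀ x, p x ∈ N x := by
      intro x
      refine ⟨0, le_refl 0, ?_⟩
      rw [hray0, dist_self]
      exact hε0
    have hNbig : ∀ (x : ℂ) (M : ℝ), ∃ w ∈ N x, M < ‖w‖ := by
      intro x M
      have hv0 : 0 < ‖v c x‖ := norm_pos_iff.mpr (hvne c x)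
      set t : ℝ := (|M| + ‖p x‖ + 1)/‖v c x‖ with ht
      have ht0 : 0 ≤ t := by positivity
      refine ⟨ray c x t, ⟨t, ht0, by simp [dist_self, hε0]⟩, ?_⟩
      have htv : ‖(t:ℂ) * v c x‖ = |M| + ‖p x‖ + 1 := by
        rw [norm_mul, Complex.norm_real, Real.norm_eq_abs, abs_of_nonneg ht0, ht,
          div_mul_cancel₀ _ hv0.ne']
      have h1 : ‖(t:ℂ) * v c x‖ - ‖ray c x t‖ ≤ ‖p x‖ := by
        have h2 := norm_sub_norm_le ((t:ℂ) * v c x) (ray c x t)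
        have e : (t:ℂ) * v c x - ray c x t = -(p x) := by
          simp only [hray]; ring
        rw [e, norm_neg] at h2
        exact h2
      rw [htv] at h1
      have := abs_nonneg M
      have := le_abs_self M
      linarith
    have hNsphere : ∀ x, Bad x → ∃ w ∈ N x, ‖w‖ = ρ := by
      intro x hx
      obtain ⟨b, hbN, hbρ⟩ := hNbig x ρ
      have hpρ : ‖p x‖ ≤ R₀ := hcompnorm x hx _ (hp x hx).1
      have hIcc := (hNconv x).isPreconnected.intermediate_value (hpx_in_N x) hbN
        (continuous_norm.continuousOn)
      have hmem : ρ ∈ Icc ‖p x‖ ‖b‖ := ⟨by rw [hρ]; linarith, hbρ.le⟩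
      obtain ⟨w, hwN, hwρ⟩ := hIcc hmem
      exact ⟨w, hwN, hwρ⟩
    set T : Set ℂ := Metric.sphere (0:ℂ) ρ with hT
    have hρ0 : (0:ℝ) < ρ := by rw [hρ]; linarith
    have hTnotK : ∀ w ∈ T, w ∉ K := by
      intro w hw hwK
      rw [hT, mem_sphere_zero_iff_norm] at hw
      have := hR₀ w hwK
      rw [hw, hρ] at this
      linarith
    have hTsub : T ⊆ (G c n)ᶜ := fun w hw hwG => hTnotK w hw (hGK c n hwG)
    have hTconn : IsPreconnected T := (isConnected_sphere rank_gt 0 hρ0.le).isPreconnected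
    set y₀ : ℂ := ((ρ:ℝ):ℂ) with hy₀
    have hy₀T : y₀ ∈ T := by
      rw [hT, mem_sphere_zero_iff_norm, hy₀, Complex.norm_real, Real.norm_eq_abs,
        abs_of_pos hρ0]
    have hNT : ∀ x, Bad x → IsPreconnected (N x ∪ T) := by
      intro x hx
      obtain ⟨w₁, hw1, hw2⟩ := hNsphere x hx
      exact IsPreconnected.union w₁ hw1 (by rw [hT, mem_sphere_zero_iff_norm]; exact hw2)
        (hNconv x).isPreconnected hTconn
    have hCsub : ∀ y, y ∉ K → connectedComponentIn Kᶜ y ⊆ (G c n)ᶜ := by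
      intro y hy u hu huG
      exact (connectedComponentIn_subset Kᶜ y hu) (hGK c n huG)
    apply isPreconnected_of_forall y₀
    intro y hy
    by_cases hyK : y ∈ K
    · have hyG : ¬ (∀ x, Bad x → ∀ t : ℝ, 0 ≤ t → 1/(n+1 : ℝ) ≤ dist y (ray c x t)) := by
        intro hcon
        exact hy ⟨hyK, hcon⟩
      push_neg at hyG
      obtain ⟨x, hx, t, ht, hd⟩ := hyG
      refine ⟨N x ∪ T, union_subset (hNsub x hx) hTsub, Or.inr hy₀T,
        Or.inl ⟨t, ht, hd⟩, hNT x hx⟩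
    · by_cases hyb : IsBounded (connectedComponentIn Kᶜ y)
      · have hxBad : Bad y := ⟨hyK, hyb⟩
        refine ⟨connectedComponentIn Kᶜ y ∪ (N y ∪ T),
          union_subset (hCsub y hyK) (union_subset (hNsub y hxBad) hTsub),
          Or.inr (Or.inr hy₀T), Or.inl (mem_connectedComponentIn hyK), ?_⟩
        exact IsPreconnected.union (p y) (hp y hxBad).1 (Or.inl (hpx_in_N y))
          isPreconnected_connectedComponentIn (hNT y hxBad)
      · have hOsub := houtside y hyK hyb
        have hy₀C : y₀ ∈ connectedComponentIn Kᶜ y := by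
          apply hOsub
          simp only [mem_setOf_eq, hy₀, Complex.norm_real, Real.norm_eq_abs, abs_of_pos hρ0]
          rw [hρ]; linarith
        refine ⟨connectedComponentIn Kᶜ y ∪ T,
          union_subset (hCsub y hyK) hTsub, Or.inr hy₀T,
          Or.inl (mem_connectedComponentIn hyK), ?_⟩
        exact IsPreconnected.union y₀ hy₀C hy₀T
          isPreconnected_connectedComponentIn hTconn
  -- coverage
  have hcover : ∀ z ∈ K, ∃ (c : ℚ × ℚ) (n : ℕ), z ∈ G c n := by
    intro z hz
    obtain ⟨r, hr0, hball⟩ := Metric.isOpen_iff.mp hΩ z (hKΩ hz)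
    obtain ⟨q1, hq1⟩ := exists_rat_near z.re (show (0:ℝ) < r/8 by linarith)
    obtain ⟨q2, hq2⟩ := exists_rat_near z.im (show (0:ℝ) < r/8 by linarith)
    set c : ℚ × ℚ := (q1, q2) with hc
    have hzc : dist z (toC c) < r/4 := by
      rw [Complex.dist_eq]
      have hre : (z - toC c).re = z.re - (q1 : ℝ) := by
        simp [htoC, hc]
      have him : (z - toC c).im = z.im - (q2 : ℝ) := by
        simp [htoC, hc]
      calc ‖z - toC c‖ ≤ |(z - toC c).re| + |(z - toC c).im| :=
            Complex.norm_le_abs_re_add_abs_im _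
        _ < r/4 := by rw [hre, him]; rw [abs_sub_comm z.re, abs_sub_comm z.im] at *; linarith
    have hmain : ∀ x, Bad x → ∀ t : ℝ, 0 ≤ t → r ≤ dist z (ray c x t) := by
      intro x hx t ht
      have hpΩ : p x ∉ Ω := (hp x hx).2
      have hzp : r ≤ dist z (p x) := by
        by_contra h
        push_neg at h
        exact hpΩ (hball (mem_ball'.mpr h))
      have hpc : r - r/4 ≤ dist (p x) (toC c) := by
        have h1 : dist z (p x) ≤ dist z (toC c) + dist (toC c) (p x) := dist_triangle _ _ _
        rw [dist_comm (toC c) (p x)] at h1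
        linarith
      have hpne : p x ≠ toC c := by
        intro h
        rw [h, dist_self] at hpc
        linarith
      have hveq : v c x = p x - toC c := by simp only [hv, if_neg hpne]
      set u : ℂ := z - p x with hu
      set vv : ℂ := p x - toC c with hvv
      have hvnorm : r - r/4 ≤ ‖vv‖ := by
        rw [hvv, ← Complex.dist_eq]
        exact hpc
      have hznorm : ‖z - toC c‖ < r/4 := by
        rw [← Complex.dist_eq]
        exact hzc
      have hobt : u.re * vv.re + u.im * vv.im ≤ 0 := by
        have e : u.re*vv.re + u.im*vv.im
            = ((z - toC c) * (starRingEnd ℂ vv)).re - Complex.normSq vv := by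
          simp only [hu, hvv, Complex.mul_re, Complex.normSq_apply, Complex.conj_re,
            Complex.conj_im, Complex.sub_re, Complex.sub_im]
          ring
        have h1 : ((z - toC c) * (starRingEnd ℂ vv)).re ≤ ‖z - toC c‖ * ‖vv‖ := by
          calc ((z - toC c) * (starRingEnd ℂ vv)).re
              ≤ ‖(z - toC c) * (starRingEnd ℂ vv)‖ := Complex.re_le_norm _
            _ = ‖z - toC c‖ * ‖vv‖ := by
                rw [norm_mul, Complex.norm_conj]
        have h2 : Complex.normSq vv = ‖vv‖^2 := by
          rw [Complex.sq_norm]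
        rw [e, h2]
        nlinarith [hvnorm, hznorm, hr0]
      have hkey : dist z (p x) ≤ dist z (ray c x t) := by
        rw [dist_eq_norm, dist_eq_norm]
        have e : z - ray c x t = u - (t:ℂ) * vv := by
          simp only [hray, hveq, hu, hvv]
          ring
        rw [e, show z - p x = u from rfl]
        have hsq : ‖u‖^2 ≤ ‖u - (t:ℂ)*vv‖^2 := by
          rw [Complex.sq_norm, Complex.sq_norm,
            Complex.normSq_apply, Complex.normSq_apply]
          simp only [Complex.sub_re, Complex.sub_im, Complex.mul_re, Complex.mul_im,
            Complex.ofReal_re, Complex.ofReal_im]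
          nlinarith [mul_nonneg ht (neg_nonneg.mpr hobt), sq_nonneg (t*vv.re),
            sq_nonneg (t*vv.im)]
        exact (pow_le_pow_iff_left₀ (norm_nonneg _) (norm_nonneg _) two_ne_zero).mp hsq
      linarith
    obtain ⟨n, hn⟩ := exists_nat_one_div_lt hr0
    refine ⟨c, n, hz, ?_⟩
    intro x hx t ht
    calc 1/(n+1:ℝ) ≤ r := hn.le
      _ ≤ dist z (ray c x t) := hmain x hx t ht
  -- assembly
  obtain ⟨e⟩ : Nonempty (ℕ ≃ (ℚ × ℚ) × ℕ) := ⟨(Denumerable.eqv ((ℚ × ℚ) × ℕ)).symm⟩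
  refine ⟨fun k => G (e k).1 (e k).2,
    fun k => ⟨hGcomp _ _, polyHull_eq_self (hGcomp _ _) (hGpoly _ _)⟩, ?_⟩
  apply Subset.antisymm
  · intro z hz
    obtain ⟨c, n, hcn⟩ := hcover z hz
    refine mem_iUnion.mpr ⟨e.symm (c, n), ?_⟩
    rw [Equiv.apply_symm_apply]
    exact hcn
  · exact iUnion_subset fun k => hGK _ _
end
end

section
/- The Sierpinski triangle S ⊆ ℂ is not a countable union of compact sets each of which is holomorphically convex in some fixed open set Ω ⊇ S. -/
section SierpAux
open Set Metric Complex


/-- fixed point of z ↦ (z+v)/2 belongs to any closed nonempty invariant set -/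
lemma aux_fixedpt_mem (S : Set ℂ) (hcl : IsClosed S) (hne : S.Nonempty) (v : ℂ)
    (hmap : ∀ z ∈ S, (z + v) / 2 ∈ S) : v ∈ S := by
  obtain ⟨s, hs⟩ := hne
  have hmem : ∀ n : ℕ, v + (s - v) * (1/2 : ℂ) ^ n ∈ S := by
    intro n
    induction n with
    | zero => simpa using hs
    | succ n ih =>
      have := hmap _ ih
      have heq : (v + (s - v) * (1/2:ℂ) ^ n + v) / 2 = v + (s - v) * (1/2:ℂ) ^ (n+1) := by
        ring
      rwa [heq] at this
  have htend : Filter.Tendsto (fun n : ℕ => v + (s - v) * (1/2 : ℂ) ^ n)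
      Filter.atTop (nhds v) := by
    have h0 : Filter.Tendsto (fun n : ℕ => (1/2 : ℂ) ^ n) Filter.atTop (nhds 0) := by
      apply tendsto_pow_atTop_nhds_zero_of_norm_lt_one
      norm_num
    have := (tendsto_const_nhds : Filter.Tendsto (fun _ : ℕ => v) Filter.atTop (nhds v)).add
      ((tendsto_const_nhds.mul h0 : Filter.Tendsto (fun n : ℕ => (s - v) * (1/2:ℂ)^n) Filter.atTop (nhds ((s-v)*0))))
    simpa using this
  exact hcl.mem_of_tendsto htend (Filter.Eventually.of_forall hmem)

lemma aux_seg_mem (S : Set ℂ) (hcl : IsClosed S) (p q : ℂ) (hp : p ∈ S) (hq : q ∈ S)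
    (hmp : ∀ z ∈ S, (z + p) / 2 ∈ S) (hmq : ∀ z ∈ S, (z + q) / 2 ∈ S) :
    ∀ t : ℝ, 0 ≤ t → t ≤ 1 → p + (t : ℂ) * (q - p) ∈ S := by
  have dyadic : ∀ n k : ℕ, k ≤ 2 ^ n → p + ((k : ℂ) / 2 ^ n) * (q - p) ∈ S := by
    intro n
    induction n with
    | zero =>
      intro k hk
      interval_cases k
      · simpa using hp
      · simpa using hq
    | succ n ih =>
      intro k hk
      rcases le_or_gt k (2 ^ n) with h | h
      · have := hmp _ (ih k h)
        have heq : (p + ((k:ℂ)/2^n) * (q-p) + p) / 2 = p + ((k:ℂ)/2^(n+1)) * (q-p) := by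
          ring
        rwa [heq] at this
      · have hk' : k - 2 ^ n ≤ 2 ^ n := by omega
        have := hmq _ (ih (k - 2^n) hk')
        have hcast : ((k - 2^n : ℕ) : ℂ) = (k : ℂ) - 2 ^ n := by
          rw [Nat.cast_sub h.le]
          push_cast
          ring
        have heq : (p + (((k - 2^n : ℕ):ℂ)/2^n) * (q-p) + q) / 2
            = p + ((k:ℂ)/2^(n+1)) * (q-p) := by
          rw [hcast]
          have : (2:ℂ)^n ≠ 0 := pow_ne_zero n two_ne_zero
          field_simp
          ring
        rwa [heq] at this
  intro t ht0 ht1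
  have htend : Filter.Tendsto (fun n : ℕ => p + ((⌊t * 2^n⌋₊ : ℂ) / 2^n) * (q - p))
      Filter.atTop (nhds (p + (t:ℂ) * (q - p))) := by
    have hre : Filter.Tendsto (fun n : ℕ => ((⌊t * 2^n⌋₊ : ℝ) / 2^n)) Filter.atTop (nhds t) := by
      have hb : ∀ n : ℕ, |(⌊t * 2^n⌋₊ : ℝ) / 2^n - t| ≤ (1/2) ^ n := by
        intro n
        have h2 : (0:ℝ) < 2 ^ n := by positivity
        have hpow : (1/2:ℝ)^n * 2^n = 1 := by rw [← mul_pow]; norm_num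
        have e1 : (⌊t * 2^n⌋₊ : ℝ) / 2^n * 2^n = (⌊t * 2^n⌋₊ : ℝ) :=
          div_mul_cancel₀ _ (ne_of_gt h2)
        have hfl := Nat.floor_le (by positivity : (0:ℝ) ≤ t * 2^n)
        have hfu := Nat.lt_floor_add_one (t * 2^n)
        rw [abs_le]
        constructor
        · nlinarith [hpow, e1, hfu, h2]
        · nlinarith [hpow, e1, hfl, h2]
      have hgeo : Filter.Tendsto (fun n : ℕ => ((1:ℝ)/2) ^ n) Filter.atTop (nhds 0) := by
        apply tendsto_pow_atTop_nhds_zero_of_lt_one <;> norm_num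
      have : Filter.Tendsto (fun n : ℕ => (⌊t * 2^n⌋₊ : ℝ) / 2^n - t) Filter.atTop (nhds 0) := by
        apply squeeze_zero_norm hb hgeo
      simpa using this.add_const t
    have : Filter.Tendsto (fun n : ℕ => (((⌊t * 2^n⌋₊ : ℝ) / 2^n : ℝ) : ℂ)) Filter.atTop (nhds (t:ℂ)) :=
      (Complex.continuous_ofReal.tendsto t).comp hre
    have h3 := (this.mul (tendsto_const_nhds : Filter.Tendsto (fun _ : ℕ => q - p) Filter.atTop (nhds (q-p)))).const_add p
    convert h3 using 2 with n
    push_cast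
    ring
  refine hcl.mem_of_tendsto htend (Filter.Eventually.of_forall fun n => ?_)
  exact dyadic n _ (by
    have : t * 2^n ≤ 2^n := by nlinarith [pow_pos (by norm_num : (0:ℝ)<2) n]
    calc ⌊t * 2^n⌋₊ ≤ ⌊(2^n : ℝ)⌋₊ := Nat.floor_le_floor this
    _ = 2^n := by
        rw [show ((2:ℝ)^n) = ((2^n : ℕ) : ℝ) by push_cast; ring, Nat.floor_natCast])

lemma aux_tile (S : Set ℂ)
    (hcover : ∀ x ∈ S, ∃ v : ℂ, (∀ z ∈ S, (z + v) / 2 ∈ S) ∧ ∃ y ∈ S, x = (y + v) / 2) :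
    ∀ k : ℕ, ∀ x ∈ S, ∃ c : ℂ, (∀ z ∈ S, c + z / 2 ^ k ∈ S) ∧ ∃ y ∈ S, x = c + y / 2 ^ k := by
  intro k
  induction k with
  | zero =>
    intro x hx
    exact ⟨0, fun z hz => by simpa using hz, x, hx, by simp⟩
  | succ k ih =>
    intro x hx
    obtain ⟨v, hvmap, y', hy', hxy'⟩ := hcover x hx
    obtain ⟨c', hc'map, y, hy, hy'eq⟩ := ih y' hy'
    refine ⟨(c' + v) / 2, fun z hz => ?_, y, hy, ?_⟩
    · have := hvmap _ (hc'map z hz)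
      have heq : (c' + z / 2 ^ k + v) / 2 = (c' + v) / 2 + z / 2 ^ (k + 1) := by ring
      rwa [heq] at this
    · rw [hxy', hy'eq]; ring

lemma aux_null (S : Set ℂ) (hS : IsCompact S)
    (hsub : S ⊆ ⋃ i : Fin 3,
      (fun z => (z + ![0, 1, Complex.exp (Real.pi / 3 * Complex.I)] i) / 2) '' S) :
    MeasureTheory.volume S = 0 := by
  set μ := (MeasureTheory.volume : MeasureTheory.Measure ℂ)
  have himg : ∀ v : ℂ, μ ((fun z => (z + v) / 2) '' S) = ENNReal.ofReal (1/4) * μ S := by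
    intro v
    have heq : (fun z : ℂ => (z + v) / 2) = fun z => AffineMap.homothety v (1/2 : ℝ) z := by
      funext z
      simp [AffineMap.homothety_apply]
      push_cast
      ring_nf
    rw [heq]
    rw [show ((fun z => AffineMap.homothety v (1/2:ℝ) z) '' S) = AffineMap.homothety v (1/2:ℝ) '' S from rfl]
    rw [MeasureTheory.Measure.addHaar_image_homothety]
    congr 1
    rw [Complex.finrank_real_complex]
    norm_num
  have hle : μ S ≤ 3 * (ENNReal.ofReal (1/4) * μ S) := by
    calc μ S ≤ μ (⋃ i : Fin 3, (fun z => (z + ![0, 1, Complex.exp (Real.pi / 3 * Complex.I)] i) / 2) '' S) :=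
          MeasureTheory.measure_mono hsub
    _ ≤ ∑ i : Fin 3, μ ((fun z => (z + ![0, 1, Complex.exp (Real.pi / 3 * Complex.I)] i) / 2) '' S) :=
          MeasureTheory.measure_iUnion_fintype_le _ _
    _ = 3 * (ENNReal.ofReal (1/4) * μ S) := by
          simp [himg]
  have hfin : μ S < ⊤ := hS.measure_lt_top
  by_contra h
  have hpos : 0 < μ S := pos_iff_ne_zero.mpr h
  have : 3 * (ENNReal.ofReal (1/4) * μ S) < μ S := by
    rw [← mul_assoc]
    have h34 : (3 : ENNReal) * ENNReal.ofReal (1/4) < 1 := by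
      rw [show (3:ENNReal) = ENNReal.ofReal 3 by simp, ← ENNReal.ofReal_mul (by norm_num)]
      rw [show (1:ENNReal) = ENNReal.ofReal 1 by simp]
      exact ENNReal.ofReal_lt_ofReal_iff_of_nonneg (by norm_num) |>.mpr (by norm_num)
    calc 3 * ENNReal.ofReal (1/4) * μ S < 1 * μ S := by
          exact ENNReal.mul_lt_mul_left h hfin.ne h34
    _ = μ S := one_mul _
  exact absurd hle (not_le.mpr this)

noncomputable def sierpOmega : ℂ := Complex.exp (Real.pi / 3 * Complex.I)

lemma sierpOmega_eq : sierpOmega = (1/2 : ℝ) + (Real.sqrt 3 / 2 : ℝ) * Complex.I := by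
  unfold sierpOmega
  rw [show (Real.pi / 3 : ℂ) * Complex.I = (Real.pi/3 : ℝ) * Complex.I by push_cast; ring]
  rw [Complex.exp_mul_I]
  rw [← Complex.ofReal_cos, ← Complex.ofReal_sin]
  rw [Real.cos_pi_div_three, Real.sin_pi_div_three]

lemma sierpOmega_re : sierpOmega.re = 1/2 := by rw [sierpOmega_eq]; simp
lemma sierpOmega_im : sierpOmega.im = Real.sqrt 3 / 2 := by rw [sierpOmega_eq]; simp

/-- the open middle triangle -/
def sierpE : Set ℂ :=
  {z : ℂ | z.im < Real.sqrt 3 / 4 ∧ Real.sqrt 3 / 2 < Real.sqrt 3 * z.re + z.im ∧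
    Real.sqrt 3 * z.re - z.im < Real.sqrt 3 / 2}

lemma sierpE_open : IsOpen sierpE := by
  unfold sierpE
  have h1 : IsOpen {z : ℂ | z.im < Real.sqrt 3 / 4} :=
    isOpen_lt Complex.continuous_im continuous_const
  have h2 : IsOpen {z : ℂ | Real.sqrt 3 / 2 < Real.sqrt 3 * z.re + z.im} :=
    isOpen_lt continuous_const ((continuous_const.mul Complex.continuous_re).add Complex.continuous_im)
  have h3 : IsOpen {z : ℂ | Real.sqrt 3 * z.re - z.im < Real.sqrt 3 / 2} :=
    isOpen_lt ((continuous_const.mul Complex.continuous_re).sub Complex.continuous_im) continuous_const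
  exact h1.inter (h2.inter h3)

lemma sierpE_nonempty : sierpE.Nonempty := by
  refine ⟨(1/2 : ℝ) + (Real.sqrt 3 / 6 : ℝ) * Complex.I, ?_, ?_, ?_⟩ <;>
  · simp only [Complex.add_re, Complex.add_im, Complex.ofReal_re, Complex.ofReal_im,
      Complex.mul_re, Complex.mul_im, Complex.I_re, Complex.I_im]
    nlinarith [Real.sq_sqrt (by norm_num : (3:ℝ) ≥ 0), Real.sqrt_pos.mpr (by norm_num : (3:ℝ) > 0)]

lemma sierpE_subset_ball : sierpE ⊆ Metric.ball 0 2 := by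
  intro z hz
  obtain ⟨h1, h2, h3⟩ := hz
  have hs3 : 0 < Real.sqrt 3 := Real.sqrt_pos.mpr (by norm_num)
  have hs3' : Real.sqrt 3 < 2 := by
    nlinarith [Real.sq_sqrt (by norm_num : (3:ℝ) ≥ 0)]
  have him0 : 0 ≤ z.im := by nlinarith
  have hre1 : z.re ≤ 1 := by nlinarith
  have hre0 : 0 ≤ z.re := by nlinarith
  have him1 : z.im ≤ 1/2 := by nlinarith
  rw [Metric.mem_ball, dist_zero_right]
  have := Complex.norm_le_abs_re_add_abs_im z
  calc ‖z‖ ≤ |z.re| + |z.im| := this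
  _ ≤ 1 + 1/2 := by
      rw [_root_.abs_of_nonneg hre0, _root_.abs_of_nonneg him0]
      linarith
  _ < 2 := by norm_num

lemma sierpE_frontier_param (z : ℂ) (hz : z ∈ frontier sierpE) :
    ∃ t : ℝ, 0 ≤ t ∧ t ≤ 1 ∧
      (z = (1 + (t:ℂ) * (sierpOmega - 1) + 0) / 2 ∨
       z = (0 + (t:ℂ) * (sierpOmega - 0) + 1) / 2 ∨
       z = (0 + (t:ℂ) * (1 - 0) + sierpOmega) / 2) := by
  have hs3 : (0:ℝ) < Real.sqrt 3 := Real.sqrt_pos.mpr (by norm_num)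
  have hsq : Real.sqrt 3 * Real.sqrt 3 = 3 := Real.mul_self_sqrt (by norm_num)
  set K : Set ℂ := {z : ℂ | z.im ≤ Real.sqrt 3 / 4 ∧ Real.sqrt 3 / 2 ≤ Real.sqrt 3 * z.re + z.im ∧
      Real.sqrt 3 * z.re - z.im ≤ Real.sqrt 3 / 2} with hKdef
  have hKclosed : IsClosed K := by
    rw [hKdef]
    have h1 : IsClosed {z : ℂ | z.im ≤ Real.sqrt 3 / 4} :=
      isClosed_le Complex.continuous_im continuous_const
    have h2 : IsClosed {z : ℂ | Real.sqrt 3 / 2 ≤ Real.sqrt 3 * z.re + z.im} :=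
      isClosed_le continuous_const ((continuous_const.mul Complex.continuous_re).add Complex.continuous_im)
    have h3 : IsClosed {z : ℂ | Real.sqrt 3 * z.re - z.im ≤ Real.sqrt 3 / 2} :=
      isClosed_le ((continuous_const.mul Complex.continuous_re).sub Complex.continuous_im) continuous_const
    exact h1.inter (h2.inter h3)
  have hcl : closure sierpE ⊆ K := by
    apply closure_minimal _ hKclosed
    rintro w ⟨h1, h2, h3⟩
    exact ⟨h1.le, h2.le, h3.le⟩
  have hzK : z ∈ K := hcl hz.1
  have hznE : z ∉ sierpE := by
    intro h
    exact hz.2 (by rwa [sierpE_open.interior_eq])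
  obtain ⟨k1, k2, k3⟩ := hzK
  have hz' : z = (↑z.re : ℂ) + ↑z.im * Complex.I := (Complex.re_add_im z).symm
  simp only [sierpE, Set.mem_setOf_eq, not_and_or, not_lt] at hznE
  rcases hznE with htop | hleft | hright
  · -- top edge: z.im = √3/4
    have him : z.im = Real.sqrt 3 / 4 := le_antisymm k1 htop
    have hre1 : 1/4 ≤ z.re := by nlinarith
    have hre2 : z.re ≤ 3/4 := by nlinarith
    refine ⟨2 * z.re - 1/2, by linarith, by linarith, Or.inr (Or.inr ?_)⟩
    have key : (0 + ((2 * z.re - 1/2 : ℝ):ℂ) * (1 - 0) + sierpOmega) / 2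
        = ↑z.re + ↑z.im * Complex.I := by
      rw [sierpOmega_eq, him]; push_cast; ring
    rw [key]
    exact (Complex.re_add_im z).symm
  · -- left edge: √3 re + im = √3/2
    have heq : Real.sqrt 3 * z.re + z.im = Real.sqrt 3 / 2 := le_antisymm hleft k2
    have him0 : 0 ≤ z.im := by nlinarith
    have him1 : z.im ≤ Real.sqrt 3 / 4 := k1
    set t : ℝ := 4 * z.im / Real.sqrt 3 with htdef
    have ht0 : 0 ≤ t := by positivity
    have ht1 : t ≤ 1 := by
      rw [htdef, div_le_one hs3]; nlinarith
    have hre : z.re = 1/2 - t/4 := by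
      rw [htdef]; field_simp; nlinarith
    have him : z.im = t * Real.sqrt 3 / 4 := by
      rw [htdef]; field_simp
    refine ⟨t, ht0, ht1, Or.inl ?_⟩
    have key : (1 + (t:ℂ) * (sierpOmega - 1) + 0) / 2 = ↑z.re + ↑z.im * Complex.I := by
      rw [sierpOmega_eq, hre, him]; push_cast; ring
    rw [key]
    exact (Complex.re_add_im z).symm
  · -- right edge: √3 re - im = √3/2
    have heq : Real.sqrt 3 * z.re - z.im = Real.sqrt 3 / 2 := le_antisymm k3 hright
    have him0 : 0 ≤ z.im := by nlinarith
    have him1 : z.im ≤ Real.sqrt 3 / 4 := k1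
    set t : ℝ := 4 * z.im / Real.sqrt 3 with htdef
    have ht0 : 0 ≤ t := by positivity
    have ht1 : t ≤ 1 := by
      rw [htdef, div_le_one hs3]; nlinarith
    have hre : z.re = 1/2 + t/4 := by
      rw [htdef]; field_simp; nlinarith
    have him : z.im = t * Real.sqrt 3 / 4 := by
      rw [htdef]; field_simp
    refine ⟨t, ht0, ht1, Or.inr (Or.inl ?_)⟩
    have key : (0 + (t:ℂ) * (sierpOmega - 0) + 1) / 2 = ↑z.re + ↑z.im * Complex.I := by
      rw [sierpOmega_eq, hre, him]; push_cast; ring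
    rw [key]
    exact (Complex.re_add_im z).symm

end SierpAux

open Set Metric Complex in
/-- The Sierpinski triangle (the attractor of the IFS of three half-scalings towards
the vertices of an equilateral triangle) is not a countable union of compact sets each
holomorphically convex in a fixed open set `Ω ⊇ S`. -/
theorem stmt15 (S : Set ℂ) (hS : IsCompact S) (hne : S.Nonempty)
    (hself : S = ⋃ i : Fin 3,
      (fun z => (z + ![0, 1, Complex.exp (Real.pi / 3 * Complex.I)] i) / 2) '' S)
    (Ω : Set ℂ) (hΩ : IsOpen Ω) (hSΩ : S ⊆ Ω) :
    ¬ ∃ F : ℕ → Set ℂ,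
        (∀ n, IsCompact (F n) ∧ F n ⊆ Ω ∧ holHull Ω (F n) = F n) ∧ S = ⋃ n, F n := by
  rintro ⟨F, hF, hSF⟩
  have hclS : IsClosed S := hS.isClosed
  have hnull : MeasureTheory.volume S = 0 := aux_null S hS hself.le
  have homega : Complex.exp (Real.pi / 3 * Complex.I) = sierpOmega := rfl
  rw [homega] at hself
  -- the three maps preserve S
  have hmap : ∀ i : Fin 3, ∀ z ∈ S, (z + ![0, 1, sierpOmega] i) / 2 ∈ S := by
    intro i z hz
    have : (z + ![0, 1, sierpOmega] i) / 2 ∈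
        ⋃ i : Fin 3, (fun z => (z + ![0, 1, sierpOmega] i) / 2) '' S :=
      Set.mem_iUnion.mpr ⟨i, Set.mem_image_of_mem _ hz⟩
    rwa [← hself] at this
  have hm0 : ∀ z ∈ S, (z + 0) / 2 ∈ S := by
    have := hmap 0; simpa using this
  have hm1 : ∀ z ∈ S, (z + 1) / 2 ∈ S := by
    have := hmap 1; simpa using this
  have hmw : ∀ z ∈ S, (z + sierpOmega) / 2 ∈ S := by
    have := hmap 2; simpa using this
  -- the three vertices are in S
  have h0S : (0 : ℂ) ∈ S := aux_fixedpt_mem S hclS hne 0 hm0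
  have h1S : (1 : ℂ) ∈ S := aux_fixedpt_mem S hclS hne 1 hm1
  have hwS : sierpOmega ∈ S := aux_fixedpt_mem S hclS hne sierpOmega hmw
  -- the three edges of the big triangle are in S
  have e01 := aux_seg_mem S hclS 0 1 h0S h1S hm0 hm1
  have e0w := aux_seg_mem S hclS 0 sierpOmega h0S hwS hm0 hmw
  have e1w := aux_seg_mem S hclS 1 sierpOmega h1S hwS hm1 hmw
  -- frontier of the middle triangle is in S
  have hfrontS : frontier sierpE ⊆ S := by
    intro z hz
    obtain ⟨t, ht0, ht1, hcase⟩ := sierpE_frontier_param z hz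
    rcases hcase with h | h | h
    · rw [h]; exact hm0 _ (e1w t ht0 ht1)
    · rw [h]; exact hm1 _ (e0w t ht0 ht1)
    · rw [h]; exact hmw _ (e01 t ht0 ht1)
  -- cover hypothesis for tiles
  have hcover : ∀ x ∈ S, ∃ v : ℂ, (∀ z ∈ S, (z + v) / 2 ∈ S) ∧ ∃ y ∈ S, x = (y + v) / 2 := by
    intro x hx
    rw [hself] at hx
    obtain ⟨i, y, hy, hxy⟩ := Set.mem_iUnion.mp hx
    exact ⟨![0, 1, sierpOmega] i, hmap i, y, hy, hxy.symm⟩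
  have htile := aux_tile S hcover
  -- F n are subsets of S
  have hFS : ∀ n, F n ⊆ S := fun n => hSF ▸ Set.subset_iUnion F n
  -- Baire category: some F n contains a relative ball of S
  haveI : Nonempty S := hne.to_subtype
  haveI : CompactSpace S := isCompact_iff_compactSpace.mp hS
  have hclosed : ∀ n, IsClosed ((Subtype.val : S → ℂ) ⁻¹' F n) := fun n =>
    (hF n).1.isClosed.preimage continuous_subtype_val
  have hcovS : ⋃ n, ((Subtype.val : S → ℂ) ⁻¹' F n) = Set.univ := by
    ext x
    simp only [Set.mem_iUnion, Set.mem_preimage, Set.mem_univ, iff_true]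
    have : (x : ℂ) ∈ ⋃ n, F n := hSF ▸ x.2
    exact Set.mem_iUnion.mp this
  obtain ⟨n, xhat, hxhat⟩ := nonempty_interior_of_iUnion_of_closed hclosed hcovS
  obtain ⟨ε, hε, hball⟩ := Metric.isOpen_iff.mp isOpen_interior xhat hxhat
  set x : ℂ := (xhat : ℂ) with hxdef
  have hxS : x ∈ S := xhat.2
  have hballF : ∀ y ∈ S, dist y x < ε → y ∈ F n := by
    intro y hy hdy
    have : (⟨y, hy⟩ : S) ∈ Metric.ball xhat ε := by
      rw [Metric.mem_ball, Subtype.dist_eq]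
      exact hdy
    exact interior_subset (s := (Subtype.val ⁻¹' F n : Set S)) (hball this)
  -- a ball around x inside Ω
  obtain ⟨δ, hδ, hδΩ⟩ := Metric.isOpen_iff.mp hΩ x (hSΩ hxS)
  set ε' : ℝ := min ε δ with hε'def
  have hε' : 0 < ε' := lt_min hε hδ
  -- bound on S
  obtain ⟨r, hrS⟩ := hS.isBounded.subset_closedBall 0
  have hr0 : 0 ≤ r := by
    obtain ⟨s, hs⟩ := hne
    have := hrS hs
    rw [Metric.mem_closedBall] at this
    exact le_trans dist_nonneg this
  -- choose a scale
  obtain ⟨k, hk⟩ := pow_unbounded_of_one_lt ((2 + r) / ε') (by norm_num : (1:ℝ) < 2)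
  have h2k : (0:ℝ) < 2 ^ k := by positivity
  have hscale : (2 + r) / 2 ^ k < ε' := by
    rw [div_lt_iff₀ h2k]
    rw [div_lt_iff₀ hε'] at hk
    linarith [hk]
  -- tile containing x
  obtain ⟨c, hcmap, y, hyS, hxy⟩ := htile k x hxS
  -- the homeomorphism z ↦ c + z / 2^k
  have h2kc : ((2:ℂ) ^ k)⁻¹ ≠ 0 := inv_ne_zero (pow_ne_zero _ two_ne_zero)
  set φ : ℂ ≃ₜ ℂ := (Homeomorph.mulRight₀ ((2:ℂ)^k)⁻¹ h2kc).trans (Homeomorph.addLeft c)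
    with hφdef
  have hφ : ∀ z : ℂ, φ z = c + z / 2 ^ k := by
    intro z
    simp [hφdef, Homeomorph.trans_apply, div_eq_mul_inv]
  set U : Set ℂ := φ '' sierpE with hUdef
  have hUopen : IsOpen U := (Homeomorph.isOpen_image φ).mpr sierpE_open
  have hUne : U.Nonempty := sierpE_nonempty.image φ
  -- distance estimate : images of closure sierpE are within ε' of x
  have hclE : closure sierpE ⊆ Metric.closedBall 0 2 :=
    closure_minimal (sierpE_subset_ball.trans Metric.ball_subset_closedBall)
      Metric.isClosed_closedBall
  have hdist : ∀ w ∈ closure sierpE, dist (φ w) x < ε' := by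
    intro w hw
    have hwn : ‖w‖ ≤ 2 := by
      have := hclE hw
      rwa [Metric.mem_closedBall, dist_zero_right] at this
    have hyn : ‖y‖ ≤ r := by
      have := hrS hyS
      rwa [Metric.mem_closedBall, dist_zero_right] at this
    have : φ w - x = (w - y) / 2 ^ k := by
      rw [hφ w, hxy]; ring
    rw [dist_eq_norm, this]
    rw [norm_div]
    have hn2k : ‖(2:ℂ) ^ k‖ = 2 ^ k := by
      rw [norm_pow, Complex.norm_ofNat]
    rw [hn2k]
    calc ‖w - y‖ / 2 ^ k ≤ (2 + r) / 2 ^ k := by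
          gcongr
          calc ‖w - y‖ ≤ ‖w‖ + ‖y‖ := norm_sub_le _ _
          _ ≤ 2 + r := add_le_add hwn hyn
    _ < ε' := hscale
  -- closure and frontier of U
  have hclU : closure U = φ '' closure sierpE := (φ.image_closure sierpE).symm
  have hclUball : closure U ⊆ Metric.ball x ε' := by
    rw [hclU]
    rintro _ ⟨w, hw, rfl⟩
    rw [Metric.mem_ball]
    exact hdist w hw
  have hclUΩ : closure U ⊆ Ω := fun z hz => by
    apply hδΩ
    have := hclUball hz
    rw [Metric.mem_ball] at this ⊢
    exact lt_of_lt_of_le this (min_le_right _ _)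
  have hUbd : Bornology.IsBounded U :=
    Metric.isBounded_ball.subset (subset_closure.trans hclUball)
  have hfr : frontier U = φ '' frontier sierpE := (φ.image_frontier sierpE).symm
  have hfrF : frontier U ⊆ F n := by
    rw [hfr]
    rintro _ ⟨w, hw, rfl⟩
    have hwS' : w ∈ S := hfrontS hw
    have hφwS : φ w ∈ S := by rw [hφ w]; exact hcmap w hwS'
    apply hballF _ hφwS
    have hd := hdist w (frontier_subset_closure hw)
    exact lt_of_lt_of_le hd (min_le_left _ _)
  -- a point of U not in S
  have hUS : ¬ U ⊆ S := by
    intro h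
    have hU0 : MeasureTheory.volume U = 0 :=
      le_antisymm (hnull ▸ MeasureTheory.measure_mono h) zero_le
    exact (hUopen.measure_ne_zero MeasureTheory.volume hUne) hU0
  obtain ⟨z₀, hz₀U, hz₀S⟩ := Set.not_subset.mp hUS
  have hz₀Ω : z₀ ∈ Ω := hclUΩ (subset_closure hz₀U)
  -- maximum modulus: z₀ lies in the holomorphic hull of F n
  have hhull : z₀ ∈ holHull Ω (F n) := by
    refine ⟨hz₀Ω, fun h hdiff => ?_⟩
    have hcont : ContinuousOn (fun w => ‖h w‖) (F n) :=
      ((hdiff.continuousOn).mono (hF n).2.1).norm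
    have hbdd : BddAbove ((fun w => ‖h w‖) '' F n) :=
      ((hF n).1.image_of_continuousOn hcont).bddAbove
    have hC : ∀ w ∈ frontier U, ‖h w‖ ≤ sSup ((fun w => ‖h w‖) '' F n) := fun w hw =>
      le_csSup hbdd (Set.mem_image_of_mem _ (hfrF hw))
    have hdcl : DiffContOnCl ℂ h U := (hdiff.mono hclUΩ).diffContOnCl
    exact Complex.norm_le_of_forall_mem_frontier_norm_le hUbd hdcl hC (subset_closure hz₀U)
  rw [(hF n).2.2] at hhull
  exact hz₀S (hFS n hhull)
end
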